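/- arXiv:1007.4383 — 12 statements merged into one kernel-verified Lean document; each statement's English description precedes it below -/
import Mathlib

section
/- Let G be a simple graph on vertex set [n], and let ≺ be any term order on S = K[x_1,...,x_n,y_1,...,y_n]. Define the directed graph G_≺ on vertex set [n] with an arc (i,j) whenever x_i y_j is the leading term of f_{ij} = x_i y_j - x_j y_i for an edge {i,j} of G. Then G_≺ is an acyclic directed graph. -/
open MvPolynomial

/-- The exponent vector of the monomial `x_i * y_j` in `K[x_1,…,x_n,y_1,…,y_n]`,
where the variable set is `Fin n ⊕ Fin n` (`inl` for `x`, `inr` for `y`). -/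
noncomputable def xy {n : ℕ} (i j : Fin n) : (Fin n ⊕ Fin n) →₀ ℕ :=
  Finsupp.single (Sum.inl i) 1 + Finsupp.single (Sum.inr j) 1

/-- The generators `f_{ij} = x_i y_j - x_j y_i` of the binomial edge ideal of `G`. -/
def edgeGens (n : ℕ) (K : Type*) [Field K] (G : SimpleGraph (Fin n)) :
    Set (MvPolynomial (Fin n ⊕ Fin n) K) :=
  {f | ∃ i j : Fin n, i < j ∧ G.Adj i j ∧
    f = X (Sum.inl i) * X (Sum.inr j) - X (Sum.inl j) * X (Sum.inr i)}

/-- The leading monomial (with coefficient `1`) of `f` with respect to the term order `m`. -/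
noncomputable def ldMon {σ K : Type*} [Field K] (m : MonomialOrder σ)
    (f : MvPolynomial σ K) : MvPolynomial σ K :=
  monomial (m.toSyn.symm (f.support.sup fun d => m.toSyn d)) (1 : K)

/-- The generators `f_{ij}` of the binomial edge ideal `J_G` form a (quadratic) Gröbner
basis with respect to the term order `m`: their leading monomials generate the initial
ideal of `J_G`. -/
def HasQuadGB {n : ℕ} (K : Type*) [Field K] (G : SimpleGraph (Fin n))
    (m : MonomialOrder (Fin n ⊕ Fin n)) : Prop :=
  Ideal.span (ldMon m '' edgeGens n K G) =
    Ideal.span (ldMon m '' {f | f ∈ Ideal.span (edgeGens n K G) ∧ f ≠ 0})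

/-- For any graph `G` on `[n]` and any term order `≺` on
`S = K[x_1,…,x_n,y_1,…,y_n]`, the directed graph `G_≺` on `[n]`, with an arc `(i,j)`
whenever `{i,j}` is an edge of `G` and `x_i y_j` is the leading term of
`f_{ij} = x_i y_j - x_j y_i`, is acyclic: no vertex lies on a directed cycle. -/
theorem stmt0 {n : ℕ} (G : SimpleGraph (Fin n)) (m : MonomialOrder (Fin n ⊕ Fin n))
    (i : Fin n) :
    ¬ Relation.TransGen
        (fun a b : Fin n => G.Adj a b ∧ m.toSyn (xy b a) < m.toSyn (xy a b)) i i := by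
  intro h
  have key : ∀ a b : Fin n,
      Relation.TransGen
        (fun a b : Fin n => G.Adj a b ∧ m.toSyn (xy b a) < m.toSyn (xy a b)) a b →
      m.toSyn (xy b a) < m.toSyn (xy a b) := by
    intro a b hab
    induction hab with
    | single h => exact h.2
    | tail _ h ih =>
      rename_i b c _
      have hsum : m.toSyn (xy b a) + m.toSyn (xy c b)
          < m.toSyn (xy a b) + m.toSyn (xy b c) := add_lt_add ih h.2
      rw [← map_add, ← map_add] at hsum
      have e1 : xy b a + xy c b = xy c a + xy b b := by
        simp only [xy]; abel
      have e2 : xy a b + xy b c = xy a c + xy b b := by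
        simp only [xy]; abel
      rw [e1, e2, map_add, map_add] at hsum
      exact lt_of_add_lt_add_right hsum
  exact lt_irrefl _ (key i i h)
end

section
/- Let G be a graph on [n]. Then J_G has a quadratic Gröbner basis with respect to some term order on S if and only if there is a labelling of the vertices of G with respect to which G is closed. -/
open MvPolynomial

/-- `G` is closed with respect to the (strict) ordering `lt` of its vertices:
for any two edges sharing the smaller endpoint the two larger endpoints are adjacent,
and for any two edges sharing the larger endpoint the two smaller endpoints are adjacent. -/
def ClosedWrt {V : Type*} (G : SimpleGraph V) (lt : V → V → Prop) : Prop :=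
  ∀ i j k : V, G.Adj i j → G.Adj i k → j ≠ k →
    ((lt i j → lt i k → G.Adj j k) ∧ (lt j i → lt k i → G.Adj j k))

namespace Stmt3Aux

variable {n : ℕ} {K : Type*} [Field K]

lemma xy_apply_inl (i j a : Fin n) : xy i j (Sum.inl a) = if i = a then 1 else 0 := by
  simp [xy, Finsupp.single_apply]

lemma xy_apply_inr (i j a : Fin n) : xy i j (Sum.inr a) = if j = a then 1 else 0 := by
  simp [xy, Finsupp.single_apply]

lemma xy_ne {i j : Fin n} (h : i ≠ j) : xy i j ≠ xy j i := by
  intro hc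
  have := DFunLike.congr_fun hc (Sum.inl i)
  rw [xy_apply_inl, xy_apply_inl, if_pos rfl, if_neg (Ne.symm h)] at this
  exact one_ne_zero this

lemma xy_cycle (a b c : Fin n) : xy a b + xy b c + xy c a = xy a c + xy c b + xy b a := by
  simp only [xy]; abel

lemma mono_mul (u v : (Fin n ⊕ Fin n) →₀ ℕ) :
    (monomial u (1:K)) * monomial v 1 = monomial (u+v) 1 := by
  rw [monomial_mul, one_mul]

lemma X_mul_X (a b : Fin n ⊕ Fin n) :
    (X a : MvPolynomial (Fin n ⊕ Fin n) K) * X b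
      = monomial (Finsupp.single a 1 + Finsupp.single b 1) 1 := by
  rw [X, X, monomial_mul, one_mul]

lemma binomial_support {a b : (Fin n ⊕ Fin n) →₀ ℕ} (hab : a ≠ b) :
    (monomial a (1:K) - monomial b 1).support = {a, b} := by
  classical
  ext d
  simp only [MvPolynomial.mem_support_iff, coeff_sub, coeff_monomial, Finset.mem_insert,
    Finset.mem_singleton]
  rcases eq_or_ne d a with rfl | ha <;> rcases eq_or_ne d b with rfl | hb <;>
    simp_all [Ne.symm]

lemma binomial_ne_zero {a b : (Fin n ⊕ Fin n) →₀ ℕ} (hab : a ≠ b) :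
    (monomial a (1:K) - monomial b 1) ≠ 0 := by
  intro h
  have := binomial_support (K := K) hab
  rw [h] at this
  simp only [MvPolynomial.support_zero] at this
  exact absurd (this ▸ Finset.mem_insert_self a {b}) (Finset.notMem_empty a)

end Stmt3Aux

namespace Stmt3Aux
variable {n : ℕ} {K : Type*} [Field K]

lemma ldMon_binomial (m : MonomialOrder (Fin n ⊕ Fin n)) {a b : (Fin n ⊕ Fin n) →₀ ℕ}
    (hlt : m.toSyn b < m.toSyn a) :
    ldMon m (monomial a (1:K) - monomial b 1) = monomial a 1 := by
  have hab : a ≠ b := by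
    intro h; subst h; exact lt_irrefl _ hlt
  unfold ldMon
  rw [binomial_support hab]
  have hsup : ({a, b} : Finset _).sup (fun d => m.toSyn d) = m.toSyn a := by
    rw [Finset.sup_insert, Finset.sup_singleton]
    exact sup_eq_left.mpr hlt.le
  rw [hsup, AddEquiv.symm_apply_apply]

lemma mem_span_monomials {S : Set ((Fin n ⊕ Fin n) →₀ ℕ)} {f : MvPolynomial (Fin n ⊕ Fin n) K}
    (hf : f ∈ Ideal.span ((fun d => (monomial d (1:K) : MvPolynomial (Fin n ⊕ Fin n) K)) '' S)) :
    ∀ d ∈ f.support, ∃ s ∈ S, s ≤ d := by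
  classical
  refine Submodule.span_induction (p := fun f _ => ∀ d ∈ f.support, ∃ s ∈ S, s ≤ d)
    ?_ ?_ ?_ ?_ hf
  · rintro x ⟨s, hs, rfl⟩ d hd
    rw [MvPolynomial.support_monomial] at hd
    simp only [one_ne_zero, if_false, Finset.mem_singleton] at hd
    exact ⟨s, hs, hd ▸ le_refl _⟩
  · intro d hd; simp at hd
  · intro x y _ _ hx hy d hd
    rcases Finset.mem_union.mp (MvPolynomial.support_add hd) with h | h
    exacts [hx d h, hy d h]
  · intro r x _ hx d hd
    have := MvPolynomial.support_mul r x hd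
    rw [Finset.mem_add] at this
    obtain ⟨d1, hd1, d2, hd2, rfl⟩ := this
    obtain ⟨s, hs, hle⟩ := hx d2 hd2
    exact ⟨s, hs, le_trans hle le_add_self⟩

end Stmt3Aux

namespace Stmt3Aux
variable {n : ℕ} {K : Type*} [Field K]

/-- the strict "order" on vertices induced by a monomial order -/
def vlt (m : MonomialOrder (Fin n ⊕ Fin n)) (a b : Fin n) : Prop :=
  m.toSyn (xy b a) < m.toSyn (xy a b)

lemma vlt_trans {m : MonomialOrder (Fin n ⊕ Fin n)} {a b c : Fin n}
    (h1 : vlt m a b) (h2 : vlt m b c) : vlt m a c := by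
  unfold vlt at *
  have key := congrArg m.toSyn (xy_cycle a b c)
  simp only [map_add] at key
  by_contra hcon
  push_neg at hcon
  have h3 : m.toSyn (xy a c) + (m.toSyn (xy c b) + m.toSyn (xy b a))
      < m.toSyn (xy c a) + (m.toSyn (xy b c) + m.toSyn (xy a b)) :=
    add_lt_add_of_le_of_lt hcon (add_lt_add h2 h1)
  rw [← add_assoc, ← add_assoc, ← key] at h3
  have : m.toSyn (xy c a) + m.toSyn (xy b c) + m.toSyn (xy a b)
      = m.toSyn (xy a b) + m.toSyn (xy b c) + m.toSyn (xy c a) := by abel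
  rw [this] at h3
  exact lt_irrefl _ h3

lemma vlt_trichotomy (m : MonomialOrder (Fin n ⊕ Fin n)) {a b : Fin n} (h : a ≠ b) :
    vlt m a b ∨ vlt m b a := by
  rcases lt_trichotomy (m.toSyn (xy a b)) (m.toSyn (xy b a)) with h1 | h1 | h1
  · exact Or.inr h1
  · exact absurd (m.toSyn.injective h1) (xy_ne h)
  · exact Or.inl h1

lemma vlt_asymm {m : MonomialOrder (Fin n ⊕ Fin n)} {a b : Fin n}
    (h1 : vlt m a b) (h2 : vlt m b a) : False := lt_asymm h1 h2

lemma vlt_irrefl {m : MonomialOrder (Fin n ⊕ Fin n)} {a : Fin n} (h : vlt m a a) : False :=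
  lt_irrefl _ h

/-- rank of a vertex in the `vlt` order -/
noncomputable def rank (m : MonomialOrder (Fin n ⊕ Fin n)) (a : Fin n) : Fin n := by
  classical
  refine ⟨(Finset.univ.filter fun b => vlt m b a).card, ?_⟩
  have hsub : (Finset.univ.filter fun b => vlt m b a) ⊆ Finset.univ.erase a := by
    intro c hc
    rw [Finset.mem_filter] at hc
    refine Finset.mem_erase.mpr ⟨?_, Finset.mem_univ _⟩
    rintro rfl; exact vlt_irrefl hc.2
  calc (Finset.univ.filter fun b => vlt m b a).card
      ≤ (Finset.univ.erase a).card := Finset.card_le_card hsub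
    _ < Finset.univ.card := Finset.card_erase_lt_of_mem (Finset.mem_univ a)
    _ = n := Finset.card_univ.trans (Fintype.card_fin n)

lemma rank_strictMono {m : MonomialOrder (Fin n ⊕ Fin n)} {a b : Fin n}
    (h : vlt m a b) : rank m a < rank m b := by
  classical
  have hsub : (Finset.univ.filter fun c => vlt m c a) ⊂ (Finset.univ.filter fun c => vlt m c b) := by
    constructor
    · intro c hc
      rw [Finset.mem_filter] at hc ⊢
      exact ⟨Finset.mem_univ _, vlt_trans hc.2 h⟩
    · intro hcon
      have ha : a ∈ Finset.univ.filter fun c => vlt m c b := by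
        rw [Finset.mem_filter]; exact ⟨Finset.mem_univ _, h⟩
      have := hcon ha
      rw [Finset.mem_filter] at this
      exact vlt_irrefl this.2
  exact Finset.card_lt_card hsub

lemma rank_lt_iff {m : MonomialOrder (Fin n ⊕ Fin n)} {a b : Fin n} :
    rank m a < rank m b ↔ vlt m a b := by
  refine ⟨fun h => ?_, rank_strictMono⟩
  rcases eq_or_ne a b with rfl | hne
  · exact absurd h (lt_irrefl _)
  rcases vlt_trichotomy m hne with h1 | h1
  · exact h1
  · exact absurd h (not_lt_of_gt (rank_strictMono h1))

lemma rank_injective (m : MonomialOrder (Fin n ⊕ Fin n)) : Function.Injective (rank m) := by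
  intro a b hab
  by_contra hne
  rcases vlt_trichotomy m hne with h | h
  · exact absurd (hab ▸ rank_strictMono h) (lt_irrefl _)
  · exact absurd (hab ▸ rank_strictMono h) (lt_irrefl _)

/-- the permutation of `Fin n` induced by the monomial order -/
noncomputable def rankPerm (m : MonomialOrder (Fin n ⊕ Fin n)) : Equiv.Perm (Fin n) :=
  Equiv.ofBijective (rank m) ((Finite.injective_iff_bijective).mp (rank_injective m))

lemma rankPerm_lt_iff {m : MonomialOrder (Fin n ⊕ Fin n)} {a b : Fin n} :
    rankPerm m a < rankPerm m b ↔ vlt m a b := rank_lt_iff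

end Stmt3Aux

namespace Stmt3Aux
variable {n : ℕ} {K : Type*} [Field K]

/-- abbreviation for x-variable exponent -/
noncomputable def sl (a : Fin n) : (Fin n ⊕ Fin n) →₀ ℕ := Finsupp.single (Sum.inl a) 1
/-- abbreviation for y-variable exponent -/
noncomputable def sr (a : Fin n) : (Fin n ⊕ Fin n) →₀ ℕ := Finsupp.single (Sum.inr a) 1

lemma xy_eq (i j : Fin n) : xy i j = sl i + sr j := rfl

lemma X_mul_mono (a : Fin n ⊕ Fin n) (u : (Fin n ⊕ Fin n) →₀ ℕ) :
    (X a : MvPolynomial (Fin n ⊕ Fin n) K) * monomial u 1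
      = monomial (Finsupp.single a 1 + u) 1 := by
  rw [X, monomial_mul, one_mul]

lemma gen_eq (i j : Fin n) :
    (X (Sum.inl i) * X (Sum.inr j) - X (Sum.inl j) * X (Sum.inr i)
      : MvPolynomial (Fin n ⊕ Fin n) K)
      = monomial (xy i j) 1 - monomial (xy j i) 1 := by
  rw [X_mul_X, X_mul_X]; rfl

variable {G : SimpleGraph (Fin n)} {m : MonomialOrder (Fin n ⊕ Fin n)}

lemma gen_mem {a b : Fin n} (hadj : G.Adj a b) :
    (monomial (xy a b) 1 - monomial (xy b a) 1 : MvPolynomial (Fin n ⊕ Fin n) K)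
      ∈ Ideal.span (edgeGens n K G) := by
  rcases lt_trichotomy a b with h | h | h
  · exact Ideal.subset_span (by rw [← gen_eq]; exact ⟨a, b, h, hadj, rfl⟩)
  · exact absurd (h ▸ hadj) (G.irrefl)
  · have : (monomial (xy a b) 1 - monomial (xy b a) 1 : MvPolynomial (Fin n ⊕ Fin n) K)
        = -(monomial (xy b a) 1 - monomial (xy a b) 1) := by ring
    rw [this]
    exact neg_mem (Ideal.subset_span (by rw [← gen_eq]; exact ⟨b, a, h, hadj.symm, rfl⟩))

lemma ldMon_neg (f : MvPolynomial (Fin n ⊕ Fin n) K) : ldMon m (-f) = ldMon m f := by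
  unfold ldMon
  rw [MvPolynomial.support_neg]

lemma ldMon_gens :
    ldMon m '' edgeGens n K G
      = (fun e => (monomial e 1 : MvPolynomial (Fin n ⊕ Fin n) K)) ''
        {e | ∃ p q, G.Adj p q ∧ vlt m p q ∧ e = xy p q} := by
  ext x
  constructor
  · rintro ⟨f, ⟨i, j, hij, hadj, rfl⟩, rfl⟩
    rw [gen_eq]
    rcases vlt_trichotomy m (ne_of_lt hij) with h | h
    · rw [ldMon_binomial m h]
      exact ⟨xy i j, ⟨i, j, hadj, h, rfl⟩, rfl⟩
    · have hneg : (monomial (xy i j) 1 - monomial (xy j i) 1 : MvPolynomial (Fin n ⊕ Fin n) K)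
          = -(monomial (xy j i) 1 - monomial (xy i j) 1) := by ring
      rw [hneg, ldMon_neg, ldMon_binomial m h]
      exact ⟨xy j i, ⟨j, i, hadj.symm, h, rfl⟩, rfl⟩
  · rintro ⟨e, ⟨p, q, hadj, hpq, rfl⟩, rfl⟩
    rcases lt_trichotomy p q with h | h | h
    · refine ⟨X (Sum.inl p) * X (Sum.inr q) - X (Sum.inl q) * X (Sum.inr p),
        ⟨p, q, h, hadj, rfl⟩, ?_⟩
      rw [gen_eq, ldMon_binomial m hpq]
    · exact absurd (h ▸ hadj) (G.irrefl)
    · refine ⟨X (Sum.inl q) * X (Sum.inr p) - X (Sum.inl p) * X (Sum.inr q),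
        ⟨q, p, h, hadj.symm, rfl⟩, ?_⟩
      rw [gen_eq]
      have hneg : (monomial (xy q p) 1 - monomial (xy p q) 1 : MvPolynomial (Fin n ⊕ Fin n) K)
          = -(monomial (xy p q) 1 - monomial (xy q p) 1) := by ring
      rw [hneg, ldMon_neg, ldMon_binomial m hpq]

lemma xy_le_elim {p q : Fin n} {d : (Fin n ⊕ Fin n) →₀ ℕ} (h : xy p q ≤ d) :
    1 ≤ d (Sum.inl p) ∧ 1 ≤ d (Sum.inr q) := by
  constructor
  · have h1 := Finsupp.le_def.mp h (Sum.inl p)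
    rwa [xy_apply_inl, if_pos rfl] at h1
  · have h1 := Finsupp.le_def.mp h (Sum.inr q)
    rwa [xy_apply_inr, if_pos rfl] at h1

end Stmt3Aux

namespace Stmt3Aux
variable {n : ℕ} {K : Type*} [Field K]
variable {G : SimpleGraph (Fin n)} {m : MonomialOrder (Fin n ⊕ Fin n)}

lemma caseA (hQ : Ideal.span (ldMon m '' edgeGens n K G)
      = Ideal.span (ldMon m '' {f | f ∈ Ideal.span (edgeGens n K G) ∧ f ≠ 0}))
    {i j k : Fin n} (hij : G.Adj i j) (hik : G.Adj i k)
    (h1 : vlt m i j) (h2 : vlt m i k) (hjk : vlt m j k) : G.Adj j k := by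
  have e1 : Finsupp.single (Sum.inr j) (1:ℕ) + xy i k
      = Finsupp.single (Sum.inr k) 1 + xy i j := by simp only [xy]; abel
  have e2 : Finsupp.single (Sum.inr j) (1:ℕ) + xy k i
      = Finsupp.single (Sum.inr i) 1 + xy k j := by simp only [xy]; abel
  have e3 : Finsupp.single (Sum.inr k) (1:ℕ) + xy j i
      = Finsupp.single (Sum.inr i) 1 + xy j k := by simp only [xy]; abel
  set g : MvPolynomial (Fin n ⊕ Fin n) K :=
    monomial (Finsupp.single (Sum.inr k) 1 + xy j i) 1
      - monomial (Finsupp.single (Sum.inr j) 1 + xy k i) 1 with hg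
  have hsyn : m.toSyn (Finsupp.single (Sum.inr j) 1 + xy k i)
      < m.toSyn (Finsupp.single (Sum.inr k) 1 + xy j i) := by
    rw [e2, e3, map_add, map_add]
    exact add_lt_add_right hjk _
  have hgJ : g ∈ Ideal.span (edgeGens n K G) := by
    have hid : g = X (Sum.inr j) * (monomial (xy i k) 1 - monomial (xy k i) 1)
        - X (Sum.inr k) * (monomial (xy i j) 1 - monomial (xy j i) 1) := by
      rw [mul_sub, mul_sub, X_mul_mono, X_mul_mono, X_mul_mono, X_mul_mono, e1, hg]; ring
    rw [hid]
    exact sub_mem (Ideal.mul_mem_left _ _ (gen_mem hik)) (Ideal.mul_mem_left _ _ (gen_mem hij))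
  have hg0 : g ≠ 0 := binomial_ne_zero (by intro hc; rw [hc] at hsyn; exact lt_irrefl _ hsyn)
  have hmem : ldMon m g ∈ Ideal.span (ldMon m '' edgeGens n K G) := by
    rw [hQ]; exact Ideal.subset_span ⟨g, ⟨hgJ, hg0⟩, rfl⟩
  rw [hg, ldMon_binomial m hsyn, ldMon_gens] at hmem
  have hsupp : (Finsupp.single (Sum.inr k) 1 + xy j i)
      ∈ (monomial (Finsupp.single (Sum.inr k) 1 + xy j i) (1:K)).support := by
    simp [MvPolynomial.support_monomial]
  obtain ⟨s, ⟨p, q, hadj, hpq, rfl⟩, hle⟩ := mem_span_monomials hmem _ hsupp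
  obtain ⟨hp, hq⟩ := xy_le_elim hle
  have hpj : p = j := by
    have hv : (Finsupp.single (Sum.inr k) 1 + xy j i : (Fin n ⊕ Fin n) →₀ ℕ) (Sum.inl p) = if j = p then 1 else 0 := by
      simp [xy, Finsupp.single_apply]
    rw [hv] at hp
    by_cases hjp : j = p
    · exact hjp.symm
    · rw [if_neg hjp] at hp; omega
  subst hpj
  have hq' : q = i ∨ q = k := by
    have hv : (Finsupp.single (Sum.inr k) 1 + xy p i : (Fin n ⊕ Fin n) →₀ ℕ) (Sum.inr q)
        = (if k = q then 1 else 0) + (if i = q then 1 else 0) := by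
      simp [xy, Finsupp.single_apply]
    rw [hv] at hq
    by_cases h3 : i = q
    · exact Or.inl h3.symm
    by_cases h4 : k = q
    · exact Or.inr h4.symm
    · rw [if_neg h3, if_neg h4] at hq; omega
  rcases hq' with rfl | rfl
  · exact absurd hpq (fun h => vlt_asymm h1 h)
  · exact hadj

lemma caseB (hQ : Ideal.span (ldMon m '' edgeGens n K G)
      = Ideal.span (ldMon m '' {f | f ∈ Ideal.span (edgeGens n K G) ∧ f ≠ 0}))
    {i j k : Fin n} (hij : G.Adj i j) (hik : G.Adj i k)
    (h1 : vlt m j i) (h2 : vlt m k i) (hjk : vlt m j k) : G.Adj j k := by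
  have e1 : Finsupp.single (Sum.inl j) (1:ℕ) + xy k i
      = Finsupp.single (Sum.inl k) 1 + xy j i := by simp only [xy]; abel
  have e2 : Finsupp.single (Sum.inl k) (1:ℕ) + xy i j
      = Finsupp.single (Sum.inl i) 1 + xy k j := by simp only [xy]; abel
  have e3 : Finsupp.single (Sum.inl j) (1:ℕ) + xy i k
      = Finsupp.single (Sum.inl i) 1 + xy j k := by simp only [xy]; abel
  set g : MvPolynomial (Fin n ⊕ Fin n) K :=
    monomial (Finsupp.single (Sum.inl j) 1 + xy i k) 1
      - monomial (Finsupp.single (Sum.inl k) 1 + xy i j) 1 with hg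
  have hsyn : m.toSyn (Finsupp.single (Sum.inl k) 1 + xy i j)
      < m.toSyn (Finsupp.single (Sum.inl j) 1 + xy i k) := by
    rw [e2, e3, map_add, map_add]
    exact add_lt_add_right hjk _
  have hgJ : g ∈ Ideal.span (edgeGens n K G) := by
    have hid : g = X (Sum.inl j) * (monomial (xy i k) 1 - monomial (xy k i) 1)
        - X (Sum.inl k) * (monomial (xy i j) 1 - monomial (xy j i) 1) := by
      rw [mul_sub, mul_sub, X_mul_mono, X_mul_mono, X_mul_mono, X_mul_mono, e1, hg]; ring
    rw [hid]
    exact sub_mem (Ideal.mul_mem_left _ _ (gen_mem hik)) (Ideal.mul_mem_left _ _ (gen_mem hij))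
  have hg0 : g ≠ 0 := binomial_ne_zero (by intro hc; rw [hc] at hsyn; exact lt_irrefl _ hsyn)
  have hmem : ldMon m g ∈ Ideal.span (ldMon m '' edgeGens n K G) := by
    rw [hQ]; exact Ideal.subset_span ⟨g, ⟨hgJ, hg0⟩, rfl⟩
  rw [hg, ldMon_binomial m hsyn, ldMon_gens] at hmem
  have hsupp : (Finsupp.single (Sum.inl j) 1 + xy i k)
      ∈ (monomial (Finsupp.single (Sum.inl j) 1 + xy i k) (1:K)).support := by
    simp [MvPolynomial.support_monomial]
  obtain ⟨s, ⟨p, q, hadj, hpq, rfl⟩, hle⟩ := mem_span_monomials hmem _ hsupp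
  obtain ⟨hp, hq⟩ := xy_le_elim hle
  have hqk : q = k := by
    have hv : (Finsupp.single (Sum.inl j) 1 + xy i k : (Fin n ⊕ Fin n) →₀ ℕ) (Sum.inr q) = if k = q then 1 else 0 := by
      simp [xy, Finsupp.single_apply]
    rw [hv] at hq
    by_cases hkq : k = q
    · exact hkq.symm
    · rw [if_neg hkq] at hq; omega
  subst hqk
  have hp' : p = i ∨ p = j := by
    have hv : (Finsupp.single (Sum.inl j) 1 + xy i q : (Fin n ⊕ Fin n) →₀ ℕ) (Sum.inl p)
        = (if j = p then 1 else 0) + (if i = p then 1 else 0) := by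
      simp [xy, Finsupp.single_apply]
    rw [hv] at hp
    by_cases h3 : i = p
    · exact Or.inl h3.symm
    by_cases h4 : j = p
    · exact Or.inr h4.symm
    · rw [if_neg h3, if_neg h4] at hp; omega
  rcases hp' with rfl | rfl
  · exact absurd hpq (fun h => vlt_asymm h2 h)
  · exact hadj

end Stmt3Aux

namespace Stmt3Aux
variable {n : ℕ} {K : Type*} [Field K]

/-- one reduction step: replace `x_i y_j` by `x_j y_i` for an edge `{i,j}` with `τ i < τ j` -/
def stp (G : SimpleGraph (Fin n)) (τ : Equiv.Perm (Fin n))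
    (d e : (Fin n ⊕ Fin n) →₀ ℕ) : Prop :=
  ∃ i j u, G.Adj i j ∧ τ i < τ j ∧ d = u + xy i j ∧ e = u + xy j i

variable {G : SimpleGraph (Fin n)} {τ : Equiv.Perm (Fin n)} {m : MonomialOrder (Fin n ⊕ Fin n)}

lemma stp_decrease (hcmp : ∀ i j : Fin n, τ i < τ j → m.toSyn (xy j i) < m.toSyn (xy i j))
    {d e : (Fin n ⊕ Fin n) →₀ ℕ} (h : stp G τ d e) : m.toSyn e < m.toSyn d := by
  obtain ⟨i, j, u, hadj, hlt, rfl, rfl⟩ := h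
  rw [map_add, map_add]
  exact add_lt_add_right (hcmp i j hlt) _

lemma stp_shift {d e u : (Fin n ⊕ Fin n) →₀ ℕ} (h : stp G τ d e) : stp G τ (u + d) (u + e) := by
  obtain ⟨i, j, u1, hadj, hlt, rfl, rfl⟩ := h
  exact ⟨i, j, u + u1, hadj, hlt, (add_assoc u u1 _).symm, (add_assoc u u1 _).symm⟩

lemma stp_conf (hG : ClosedWrt G (fun a b => τ a < τ b))
    {d e1 e2 : (Fin n ⊕ Fin n) →₀ ℕ} (h1 : stp G τ d e1) (h2 : stp G τ d e2) :
    ∃ c, Relation.ReflGen (stp G τ) e1 c ∧ Relation.ReflTransGen (stp G τ) e2 c := by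
  obtain ⟨i, j, u1, hij, hij', hd1, he1⟩ := h1
  obtain ⟨k, l, u2, hkl, hkl', hd2, he2⟩ := h2
  have hd12 : u1 + xy i j = u2 + xy k l := hd1.symm.trans hd2
  by_cases hik : i = k
  · subst hik
    by_cases hjl : j = l
    · -- same step
      subst hjl
      have : u1 = u2 := add_right_cancel hd12
      subst this
      have : e1 = e2 := he1.trans he2.symm
      exact ⟨e1, Relation.ReflGen.refl, this ▸ Relation.ReflTransGen.refl⟩
    · -- shared x-vertex i; critical pair
      have hadjjl : G.Adj j l := (hG i j l hij hkl hjl).1 hij' hkl'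
      have h5 : 1 ≤ u1 (Sum.inr l) := by
        have := DFunLike.congr_fun hd12 (Sum.inr l)
        rw [Finsupp.add_apply, Finsupp.add_apply, xy_apply_inr, xy_apply_inr,
          if_neg hjl, if_pos rfl] at this
        omega
      obtain ⟨w, hw⟩ := le_iff_exists_add.mp (Finsupp.single_le_iff.mpr h5)
      have hu2 : u2 = Finsupp.single (Sum.inr j) 1 + w := by
        apply add_right_cancel (b := xy i l)
        rw [← hd12, hw]
        simp only [xy]; abel
      have he1' : e1 = (Finsupp.single (Sum.inr i) 1 + w) + xy j l := by
        rw [he1, hw]; simp only [xy]; abel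
      have he2' : e2 = (Finsupp.single (Sum.inr i) 1 + w) + xy l j := by
        rw [he2, hu2]; simp only [xy]; abel
      rcases lt_trichotomy (τ j) (τ l) with h | h | h
      · refine ⟨e2, Relation.ReflGen.single ⟨j, l, _, hadjjl, h, he1', he2'⟩,
          Relation.ReflTransGen.refl⟩
      · exact absurd (τ.injective h) hjl
      · refine ⟨e1, Relation.ReflGen.refl,
          Relation.ReflTransGen.single ⟨l, j, _, hadjjl.symm, h, he2', he1'⟩⟩
  · by_cases hjl : j = l
    · -- shared y-vertex j
      subst hjl
      have hadjik : G.Adj i k := (hG j i k hij.symm hkl.symm hik).2 hij' hkl'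
      have h5 : 1 ≤ u1 (Sum.inl k) := by
        have := DFunLike.congr_fun hd12 (Sum.inl k)
        rw [Finsupp.add_apply, Finsupp.add_apply, xy_apply_inl, xy_apply_inl,
          if_neg hik, if_pos rfl] at this
        omega
      obtain ⟨w, hw⟩ := le_iff_exists_add.mp (Finsupp.single_le_iff.mpr h5)
      have hu2 : u2 = Finsupp.single (Sum.inl i) 1 + w := by
        apply add_right_cancel (b := xy k j)
        rw [← hd12, hw]
        simp only [xy]; abel
      have he1' : e1 = (Finsupp.single (Sum.inl j) 1 + w) + xy k i := by
        rw [he1, hw]; simp only [xy]; abel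
      have he2' : e2 = (Finsupp.single (Sum.inl j) 1 + w) + xy i k := by
        rw [he2, hu2]; simp only [xy]; abel
      rcases lt_trichotomy (τ i) (τ k) with h | h | h
      · refine ⟨e1, Relation.ReflGen.refl,
          Relation.ReflTransGen.single ⟨i, k, _, hadjik, h, he2', he1'⟩⟩
      · exact absurd (τ.injective h) hik
      · refine ⟨e2, Relation.ReflGen.single ⟨k, i, _, hadjik.symm, h, he1', he2'⟩,
          Relation.ReflTransGen.refl⟩
    · -- disjoint steps
      have hle : xy i j + xy k l ≤ u1 + xy i j := by
        rw [Finsupp.le_def]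
        intro v
        have hv1 : (u1 + xy i j) v = u1 v + (xy i j) v := Finsupp.add_apply _ _ _
        have hv2 := DFunLike.congr_fun hd12 v
        rw [Finsupp.add_apply, Finsupp.add_apply] at hv2
        have claim : (xy i j) v = 0 ∨ (xy k l) v = 0 := by
          rcases v with a | a
          · rw [xy_apply_inl, xy_apply_inl]
            by_cases hia : i = a
            · right; rw [if_neg (fun hka => hik (hia.trans hka.symm))]
            · left; rw [if_neg hia]
          · rw [xy_apply_inr, xy_apply_inr]
            by_cases hja : j = a
            · right; rw [if_neg (fun hla => hjl (hja.trans hla.symm))]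
            · left; rw [if_neg hja]
        rw [Finsupp.add_apply, hv1]
        rcases claim with hc | hc <;> rw [hc] <;> omega
      obtain ⟨w, hw⟩ := le_iff_exists_add.mp hle
      have hu1 : u1 = w + xy k l := by
        apply add_right_cancel (b := xy i j)
        rw [hw]; abel
      have hu2 : u2 = w + xy i j := by
        apply add_right_cancel (b := xy k l)
        rw [← hd12, hw]; abel
      refine ⟨w + xy j i + xy l k,
        Relation.ReflGen.single ⟨k, l, w + xy j i, hkl, hkl', ?_, ?_⟩,
        Relation.ReflTransGen.single ⟨i, j, w + xy l k, hij, hij', ?_, ?_⟩⟩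
      · rw [he1, hu1]; abel
      · abel
      · rw [he2, hu2]; abel
      · abel

/-- convertibility: the equivalence generated by the rewriting system -/
def Rel (G : SimpleGraph (Fin n)) (τ : Equiv.Perm (Fin n)) :
    ((Fin n ⊕ Fin n) →₀ ℕ) → ((Fin n ⊕ Fin n) →₀ ℕ) → Prop :=
  Relation.Join (Relation.ReflTransGen (stp G τ))

lemma relEquiv (hG : ClosedWrt G (fun a b => τ a < τ b)) : Equivalence (Rel G τ) :=
  Relation.equivalence_join_reflTransGen (fun _ _ _ h1 h2 => stp_conf hG h1 h2)

lemma rel_of_stp {d e : (Fin n ⊕ Fin n) →₀ ℕ} (h : stp G τ d e) : Rel G τ d e :=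
  ⟨e, Relation.ReflTransGen.single h, Relation.ReflTransGen.refl⟩

lemma rtg_shift {d e u : (Fin n ⊕ Fin n) →₀ ℕ}
    (h : Relation.ReflTransGen (stp G τ) d e) :
    Relation.ReflTransGen (stp G τ) (u + d) (u + e) := by
  induction h with
  | refl => exact Relation.ReflTransGen.refl
  | tail _ hbc ih => exact ih.tail (stp_shift hbc)

lemma rel_shift {d e u : (Fin n ⊕ Fin n) →₀ ℕ} (h : Rel G τ d e) :
    Rel G τ (u + d) (u + e) := by
  obtain ⟨c, h1, h2⟩ := h
  exact ⟨u + c, rtg_shift h1, rtg_shift h2⟩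

end Stmt3Aux

namespace Stmt3Aux
variable {n : ℕ} {K : Type*} [Field K]
variable {G : SimpleGraph (Fin n)} {τ : Equiv.Perm (Fin n)} {m : MonomialOrder (Fin n ⊕ Fin n)}

/-- differences of convertible monomials -/
def Dset (G : SimpleGraph (Fin n)) (τ : Equiv.Perm (Fin n)) (K : Type*) [Field K] :
    Set (MvPolynomial (Fin n ⊕ Fin n) K) :=
  {f | ∃ a b, Rel G τ a b ∧ f = monomial a 1 - monomial b 1}

lemma mul_gen_mem (p : MvPolynomial (Fin n ⊕ Fin n) K) {g : MvPolynomial (Fin n ⊕ Fin n) K}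
    (hg : g ∈ Dset G τ K) : p * g ∈ Submodule.span K (Dset G τ K) := by
  obtain ⟨a, b, hab, rfl⟩ := hg
  induction p using MvPolynomial.induction_on' with
  | monomial u c =>
    have hid : monomial u c * (monomial a 1 - monomial b 1)
        = c • ((monomial (u + a) 1 - monomial (u + b) 1) :
            MvPolynomial (Fin n ⊕ Fin n) K) := by
      rw [mul_sub, monomial_mul, monomial_mul, smul_sub, smul_monomial, smul_monomial]
      simp
    rw [hid]
    exact Submodule.smul_mem _ _
      (Submodule.subset_span ⟨u + a, u + b, rel_shift hab, rfl⟩)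
  | add p q hp hq =>
    rw [add_mul]
    exact Submodule.add_mem _ hp hq

lemma mem_D_of_mem_span (hG : ClosedWrt G (fun a b => τ a < τ b))
    {f : MvPolynomial (Fin n ⊕ Fin n) K} (hf : f ∈ Ideal.span (edgeGens n K G)) :
    f ∈ Submodule.span K (Dset G τ K) := by
  refine Submodule.span_induction (p := fun f _ => f ∈ Submodule.span K (Dset G τ K))
    ?_ ?_ ?_ ?_ hf
  · rintro x ⟨i, j, hij, hadj, rfl⟩
    rw [gen_eq]
    rcases lt_trichotomy (τ i) (τ j) with h | h | h
    · exact Submodule.subset_span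
        ⟨xy i j, xy j i, rel_of_stp ⟨i, j, 0, hadj, h, (zero_add _).symm, (zero_add _).symm⟩, rfl⟩
    · exact absurd (τ.injective h) (ne_of_lt hij)
    · have : (monomial (xy i j) 1 - monomial (xy j i) 1 : MvPolynomial (Fin n ⊕ Fin n) K)
          = -(monomial (xy j i) 1 - monomial (xy i j) 1) := by ring
      rw [this]
      exact Submodule.neg_mem _ (Submodule.subset_span
        ⟨xy j i, xy i j, rel_of_stp ⟨j, i, 0, hadj.symm, h, (zero_add _).symm, (zero_add _).symm⟩,
          rfl⟩)
  · exact Submodule.zero_mem _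
  · intro x y _ _ hx hy; exact Submodule.add_mem _ hx hy
  · intro r x _ hx
    have hcomap : Submodule.span K (Dset G τ K)
        ≤ Submodule.comap (LinearMap.mulLeft K r) (Submodule.span K (Dset G τ K)) :=
      Submodule.span_le.mpr (fun g hg => mul_gen_mem r hg)
    rw [smul_eq_mul]
    exact hcomap hx

open Classical in
/-- sum of the coefficients of `f` over the convertibility class of `d` -/
noncomputable def psi (G : SimpleGraph (Fin n)) (τ : Equiv.Perm (Fin n))
    (d : (Fin n ⊕ Fin n) →₀ ℕ) (f : MvPolynomial (Fin n ⊕ Fin n) K) : K :=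
  ∑ a ∈ f.support, if Rel G τ a d then f.coeff a else 0

open Classical in
lemma psi_eq_sum_subset {d : (Fin n ⊕ Fin n) →₀ ℕ} {f : MvPolynomial (Fin n ⊕ Fin n) K}
    {T : Finset ((Fin n ⊕ Fin n) →₀ ℕ)} (hT : f.support ⊆ T) :
    psi G τ d f = ∑ a ∈ T, if Rel G τ a d then f.coeff a else 0 := by
  unfold psi
  refine Finset.sum_subset hT (fun x _ hx => ?_)
  rw [MvPolynomial.notMem_support_iff.mp hx, ite_self]

open Classical in
lemma psi_add (d : (Fin n ⊕ Fin n) →₀ ℕ) (f g : MvPolynomial (Fin n ⊕ Fin n) K) :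
    psi G τ d (f + g) = psi G τ d f + psi G τ d g := by
  rw [psi_eq_sum_subset (T := f.support ∪ g.support) MvPolynomial.support_add,
    psi_eq_sum_subset (T := f.support ∪ g.support) Finset.subset_union_left,
    psi_eq_sum_subset (T := f.support ∪ g.support) Finset.subset_union_right,
    ← Finset.sum_add_distrib]
  refine Finset.sum_congr rfl (fun a _ => ?_)
  rw [MvPolynomial.coeff_add]
  split <;> simp

open Classical in
lemma psi_smul (d : (Fin n ⊕ Fin n) →₀ ℕ) (c : K) (f : MvPolynomial (Fin n ⊕ Fin n) K) :
    psi G τ d (c • f) = c * psi G τ d f := by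
  rw [psi_eq_sum_subset (T := f.support) MvPolynomial.support_smul, psi, Finset.mul_sum]
  refine Finset.sum_congr rfl (fun a _ => ?_)
  rw [MvPolynomial.coeff_smul]
  split <;> simp

open Classical in
lemma psi_gen (hG : ClosedWrt G (fun a b => τ a < τ b)) (d : (Fin n ⊕ Fin n) →₀ ℕ)
    {a b : (Fin n ⊕ Fin n) →₀ ℕ} (hab : Rel G τ a b) :
    psi G τ d (monomial a 1 - monomial b 1 : MvPolynomial (Fin n ⊕ Fin n) K) = 0 := by
  rcases eq_or_ne a b with rfl | hne
  · simp [psi]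
  · set f : MvPolynomial (Fin n ⊕ Fin n) K := monomial a 1 - monomial b 1 with hf
    have hsupp : f.support ⊆ {a, b} := by rw [hf, binomial_support hne]
    rw [psi_eq_sum_subset hsupp, Finset.sum_insert (by simpa using hne), Finset.sum_singleton]
    have hca : f.coeff a = 1 := by
      rw [hf]; classical
      rw [MvPolynomial.coeff_sub, MvPolynomial.coeff_monomial, MvPolynomial.coeff_monomial,
        if_pos rfl, if_neg (Ne.symm hne)]
      ring
    have hcb : f.coeff b = -1 := by
      rw [hf]; classical
      rw [MvPolynomial.coeff_sub, MvPolynomial.coeff_monomial, MvPolynomial.coeff_monomial,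
        if_pos rfl, if_neg hne]
      ring
    rw [hca, hcb]
    have hiff : Rel G τ a d ↔ Rel G τ b d :=
      ⟨fun h => (relEquiv hG).trans ((relEquiv hG).symm hab) h, fun h => (relEquiv hG).trans hab h⟩
    by_cases h : Rel G τ a d
    · rw [if_pos h, if_pos (hiff.mp h)]; ring
    · rw [if_neg h, if_neg (fun hc => h (hiff.mpr hc))]; ring

lemma psi_vanish (hG : ClosedWrt G (fun a b => τ a < τ b)) (d : (Fin n ⊕ Fin n) →₀ ℕ)
    {f : MvPolynomial (Fin n ⊕ Fin n) K} (hf : f ∈ Ideal.span (edgeGens n K G)) :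
    psi G τ d f = 0 := by
  have hfD := mem_D_of_mem_span hG hf
  refine Submodule.span_induction (p := fun f _ => psi G τ d f = 0) ?_ ?_ ?_ ?_ hfD
  · rintro x ⟨a, b, hab, rfl⟩
    exact psi_gen hG d hab
  · simp [psi]
  · intro x y _ _ hx hy
    rw [psi_add, hx, hy, add_zero]
  · intro c x _ hx
    rw [psi_smul, hx, mul_zero]

end Stmt3Aux

namespace Stmt3Aux
variable {n : ℕ} {K : Type*} [Field K]
variable {G : SimpleGraph (Fin n)} {τ : Equiv.Perm (Fin n)} {m : MonomialOrder (Fin n ⊕ Fin n)}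

lemma lead_divisible (hG : ClosedWrt G (fun a b => τ a < τ b))
    (hcmp : ∀ i j : Fin n, τ i < τ j → m.toSyn (xy j i) < m.toSyn (xy i j))
    {f : MvPolynomial (Fin n ⊕ Fin n) K} (hf : f ∈ Ideal.span (edgeGens n K G)) (h0 : f ≠ 0) :
    ∃ i j, G.Adj i j ∧ τ i < τ j ∧
      xy i j ≤ m.toSyn.symm (f.support.sup fun a => m.toSyn a) := by
  classical
  set d := m.toSyn.symm (f.support.sup fun a => m.toSyn a) with hd
  have hne : f.support.Nonempty := by
    rw [Finset.nonempty_iff_ne_empty, ne_eq, MvPolynomial.support_eq_empty]; exact h0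
  obtain ⟨b, hb, hsup⟩ := Finset.exists_mem_eq_sup f.support hne (fun a => m.toSyn a)
  have hdb : d = b := by rw [hd, hsup, AddEquiv.symm_apply_apply]
  have hdsupp : d ∈ f.support := hdb ▸ hb
  have hsyn_d : m.toSyn d = f.support.sup fun a => m.toSyn a := by
    rw [hd, AddEquiv.apply_symm_apply]
  by_contra hcon
  push_neg at hcon
  -- no reduction step applies to d
  have hstep : ∀ e, ¬ stp G τ d e := by
    rintro e ⟨i, j, u, hadj, hlt, hdu, _⟩
    exact hcon i j hadj hlt (hdu ▸ le_add_self)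
  -- find another support element convertible to d
  have hpsi : psi G τ d f = 0 := psi_vanish hG d hf
  have hex : ∃ a ∈ f.support, a ≠ d ∧ Rel G τ a d := by
    by_contra hnex
    push_neg at hnex
    have : psi G τ d f = f.coeff d := by
      unfold psi
      rw [Finset.sum_eq_single d]
      · rw [if_pos ((relEquiv hG).refl d)]
      · intro a ha hne'
        rw [if_neg (hnex a ha hne')]
      · intro hc; exact absurd hdsupp hc
    rw [hpsi] at this
    exact MvPolynomial.mem_support_iff.mp hdsupp this.symm
  obtain ⟨a, hasupp, hane, harel⟩ := hex
  obtain ⟨c, hac, hdc⟩ := harel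
  -- since no step applies to d, c = d
  have hcd : c = d := by
    rcases Relation.ReflTransGen.cases_head hdc with h | ⟨e, he, _⟩
    · exact h.symm
    · exact absurd he (hstep e)
  rw [hcd] at hac
  -- reduction decreases the order
  have hdec : ∀ x y, Relation.ReflTransGen (stp G τ) x y → m.toSyn y ≤ m.toSyn x := by
    intro x y h
    induction h with
    | refl => exact le_refl _
    | tail _ hbc ih => exact le_trans (stp_decrease hcmp hbc).le ih
  have h1 : m.toSyn d ≤ m.toSyn a := hdec _ _ hac
  have h2 : m.toSyn a ≤ m.toSyn d := hsyn_d ▸ Finset.le_sup hasupp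
  exact hane (m.toSyn.injective (le_antisymm h2 h1))

lemma hasQuadGB_of_closed (hG : ClosedWrt G (fun a b => τ a < τ b))
    (hcmp : ∀ i j : Fin n, τ i < τ j → m.toSyn (xy j i) < m.toSyn (xy i j)) :
    Ideal.span (ldMon m '' edgeGens n K G) =
      Ideal.span (ldMon m '' {f | f ∈ Ideal.span (edgeGens n K G) ∧ f ≠ 0}) := by
  apply le_antisymm
  · apply Ideal.span_mono
    apply Set.image_mono
    rintro f hf
    refine ⟨Ideal.subset_span hf, ?_⟩
    obtain ⟨i, j, hij, hadj, rfl⟩ := hf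
    rw [gen_eq]
    exact binomial_ne_zero (xy_ne (ne_of_lt hij))
  · rw [Ideal.span_le]
    rintro x ⟨f, ⟨hfJ, hf0⟩, rfl⟩
    obtain ⟨i, j, hadj, hlt, hle⟩ := lead_divisible hG hcmp hfJ hf0
    obtain ⟨u, hu⟩ := le_iff_exists_add.mp hle
    have : ldMon m f = monomial u 1 * monomial (xy i j) 1 := by
      rw [mono_mul]
      unfold ldMon
      rw [hu, add_comm]
    rw [this]
    have hmem : (monomial (xy i j) 1 : MvPolynomial (Fin n ⊕ Fin n) K)
        ∈ ldMon m '' edgeGens n K G := by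
      rw [ldMon_gens]
      exact ⟨xy i j, ⟨i, j, hadj, hcmp i j hlt, rfl⟩, rfl⟩
    exact Ideal.mul_mem_left _ _ (Ideal.subset_span hmem)

end Stmt3Aux

namespace Stmt3Aux
variable {n : ℕ}

lemma exists_m (τ : Equiv.Perm (Fin n)) :
    ∃ m : MonomialOrder (Fin n ⊕ Fin n),
      ∀ i j : Fin n, τ i < τ j → m.toSyn (xy j i) < m.toSyn (xy i j) := by
  letI lo : LinearOrder (Fin n ⊕ Fin n) :=
    LinearOrder.lift' (fun v => toLex (Sum.map τ τ v))
      (toLex.injective.comp (τ.injective.sumMap τ.injective))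
  haveI hwf : @WellFoundedGT (Fin n ⊕ Fin n)
      (@Preorder.toLT _ (@PartialOrder.toPreorder _ (@LinearOrder.toPartialOrder _ lo))) :=
    @Finite.to_wellFoundedGT _ _ (lo.toPartialOrder.toPreorder)
  have key : ∀ i j : Fin n, τ i < τ j →
      (MonomialOrder.lex (σ := Fin n ⊕ Fin n)).toSyn (xy j i)
        < (MonomialOrder.lex (σ := Fin n ⊕ Fin n)).toSyn (xy i j) := by
    intro i j hij
    have hijne : i ≠ j := fun h => absurd (h ▸ hij) (lt_irrefl _)
    letI : LT (Fin n ⊕ Fin n) :=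
      @Preorder.toLT _ (@PartialOrder.toPreorder _ (@LinearOrder.toPartialOrder _ lo))
    rw [MonomialOrder.lex_lt_iff]; refine Finsupp.Lex.lt_iff.mpr ?_
    refine ⟨Sum.inl i, ?_, ?_⟩
    · intro w hw
      have hw' : toLex (Sum.map τ τ w) < toLex (Sum.map τ τ (Sum.inl i)) := hw
      rcases w with a | a
      · simp only [Sum.map_inl] at hw'
        have ha : τ a < τ i := Sum.Lex.inl_lt_inl_iff.mp hw'
        have hai : a ≠ i := fun h => absurd (h ▸ ha) (lt_irrefl _)
        have haj : a ≠ j := fun h => absurd (h ▸ (ha.trans hij)) (lt_irrefl _)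
        show (xy j i) (Sum.inl a) = (xy i j) (Sum.inl a)
        rw [xy_apply_inl, xy_apply_inl, if_neg (Ne.symm haj), if_neg (Ne.symm hai)]
      · simp only [Sum.map_inl, Sum.map_inr] at hw'
        exact absurd hw' Sum.Lex.not_inr_lt_inl
    · show (xy j i) (Sum.inl i) < (xy i j) (Sum.inl i)
      rw [xy_apply_inl, xy_apply_inl, if_neg (Ne.symm hijne), if_pos rfl]
      exact Nat.zero_lt_one
  refine ⟨{ syn := ULift (MonomialOrder.lex (σ := Fin n ⊕ Fin n)).syn
            addCommMonoidSyn := inferInstance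
            linearOrderSyn := LinearOrder.lift' ULift.down ULift.down_injective
            isOrderedAddMonoid_syn := Function.Injective.isOrderedAddMonoid ULift.down
              (fun _ _ => rfl) Iff.rfl
            toSyn := (MonomialOrder.lex (σ := Fin n ⊕ Fin n)).toSyn.trans AddEquiv.ulift.symm
            toSyn_monotone := fun a b h =>
              (MonomialOrder.lex (σ := Fin n ⊕ Fin n)).toSyn_monotone h
            wellFoundedLT_syn := ⟨InvImage.wf ULift.down (MonomialOrder.lex (σ := Fin n ⊕ Fin n)).wellFoundedLT_syn.wf⟩ }, ?_⟩
  intro i j hij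
  exact key i j hij

end Stmt3Aux

/-- For a graph `G` on `[n]`, the binomial edge ideal `J_G` has a
quadratic Gröbner basis with respect to some term order on `S` if and only if there is
a labelling of the vertices of `G` with respect to which `G` is closed. -/
theorem stmt3 {n : ℕ} (K : Type*) [Field K] (G : SimpleGraph (Fin n)) :
    (∃ m : MonomialOrder (Fin n ⊕ Fin n), HasQuadGB K G m) ↔
      ∃ σ : Equiv.Perm (Fin n), ClosedWrt G (fun a b => σ a < σ b) := by
  constructor
  · rintro ⟨m, hQ⟩
    have hQ' : Ideal.span (ldMon m '' edgeGens n K G) =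
        Ideal.span (ldMon m '' {f | f ∈ Ideal.span (edgeGens n K G) ∧ f ≠ 0}) := hQ
    refine ⟨Stmt3Aux.rankPerm m, ?_⟩
    intro i j k hij hik hjk
    constructor
    · intro ha hb
      rw [Stmt3Aux.rankPerm_lt_iff] at ha hb
      rcases Stmt3Aux.vlt_trichotomy m hjk with h | h
      · exact Stmt3Aux.caseA hQ' hij hik ha hb h
      · exact (Stmt3Aux.caseA hQ' hik hij hb ha h).symm
    · intro ha hb
      rw [Stmt3Aux.rankPerm_lt_iff] at ha hb
      rcases Stmt3Aux.vlt_trichotomy m hjk with h | h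
      · exact Stmt3Aux.caseB hQ' hij hik ha hb h
      · exact (Stmt3Aux.caseB hQ' hik hij hb ha h).symm
  · rintro ⟨τ, hG⟩
    obtain ⟨m, hcmp⟩ := Stmt3Aux.exists_m τ
    exact ⟨m, Stmt3Aux.hasQuadGB_of_closed hG hcmp⟩
end

section
/- Every closed graph is claw-free, i.e., if G is closed with respect to some labelling then G contains no three distinct edges e_1, e_2, e_3 with e_1 ∩ e_2 ∩ e_3 ≠ ∅ forming an induced K_{1,3}. Equivalently, G contains no induced complete bipartite subgraph K_{1,3}. -/
/-- Every closed graph is claw-free: if `G` is closed with respect to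
some labelling of its vertices, then `G` has no induced `K_{1,3}`, i.e. no four vertices
`a, b, c, d` with `b, c, d` pairwise distinct and nonadjacent, all adjacent to `a`. -/
theorem stmt5 {V : Type*} (G : SimpleGraph V)
    (h : ∃ ℓ : V ↪ ℕ, ClosedWrt G (fun a b => ℓ a < ℓ b)) :
    ¬ ∃ a b c d : V, G.Adj a b ∧ G.Adj a c ∧ G.Adj a d ∧
        b ≠ c ∧ b ≠ d ∧ c ≠ d ∧ ¬ G.Adj b c ∧ ¬ G.Adj b d ∧ ¬ G.Adj c d := by
  rintro ⟨a, b, c, d, hab, hac, had, hbc, hbd, hcd, nbc, nbd, ncd⟩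
  obtain ⟨ℓ, hcl⟩ := h
  have hb : ℓ a < ℓ b ∨ ℓ b < ℓ a := Nat.lt_or_ge (ℓ a) (ℓ b) |>.imp id
    (fun h' => lt_of_le_of_ne h' (fun e => hab.ne (ℓ.injective e.symm)))
  have hc : ℓ a < ℓ c ∨ ℓ c < ℓ a := Nat.lt_or_ge (ℓ a) (ℓ c) |>.imp id
    (fun h' => lt_of_le_of_ne h' (fun e => hac.ne (ℓ.injective e.symm)))
  have hd : ℓ a < ℓ d ∨ ℓ d < ℓ a := Nat.lt_or_ge (ℓ a) (ℓ d) |>.imp id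
    (fun h' => lt_of_le_of_ne h' (fun e => had.ne (ℓ.injective e.symm)))
  rcases hb with hb | hb <;> rcases hc with hc | hc <;> rcases hd with hd | hd
  · exact nbc ((hcl a b c hab hac hbc).1 hb hc)
  · exact nbc ((hcl a b c hab hac hbc).1 hb hc)
  · exact nbd ((hcl a b d hab had hbd).1 hb hd)
  · exact ncd ((hcl a c d hac had hcd).2 hc hd)
  · exact ncd ((hcl a c d hac had hcd).1 hc hd)
  · exact nbd ((hcl a b d hab had hbd).2 hb hd)
  · exact nbc ((hcl a b c hab hac hbc).2 hb hc)
  · exact nbc ((hcl a b c hab hac hbc).2 hb hc)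
end

section
/- Let G be a connected closed graph on [n] whose clique complex has facets F_i = [m_i, M_i] (intervals of integers) with 1 = m_1 < m_2 < ... < m_r, M_1 < M_2 < ... < M_r = n, m_i < M_i, and m_{i+1} ≤ M_i for all i. Then Δ(G) is a linear quasi-tree: for the order F_1,...,F_r, each F_i is a leaf of the subcomplex ⟨F_i,...,F_r⟩ and F_{i+1} is the unique branch of F_i for i < r. -/
/-- `F b` is a branch of the facet `F i` in the subcomplex `⟨F lo, …, F (r-1)⟩`:
`b ≠ i` and every other facet meets `F i` inside `F b ∩ F i`. -/
def BranchOf {V : Type*} [DecidableEq V] (F : ℕ → Finset V) (lo r i b : ℕ) : Prop :=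
  lo ≤ b ∧ b < r ∧ b ≠ i ∧
    ∀ j, lo ≤ j → j < r → j ≠ i → j ≠ b → F j ∩ F i ⊆ F b ∩ F i

/-- The complex with facets `F 0, …, F (r-1)` is a linear quasi-tree for this order:
each `F i` is a leaf of the subcomplex `⟨F i, …, F (r-1)⟩` and `F (i+1)` is its only
branch there. -/
def LinearQuasiTree {V : Type*} [DecidableEq V] (F : ℕ → Finset V) (r : ℕ) : Prop :=
  ∀ i, i + 1 < r →
    (BranchOf F i r i (i + 1) ∧ ∀ b, BranchOf F i r i b → b = i + 1)

/-- `s` is a facet of the clique complex `Δ(G)`, i.e. a maximal clique of `G`. -/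
def IsFacet {V : Type*} (G : SimpleGraph V) (s : Finset V) : Prop :=
  G.IsClique (s : Set V) ∧ ∀ t : Finset V, G.IsClique (t : Set V) → s ⊆ t → s = t

/-- `F 0, …, F (r-1)` is an enumeration (without repetitions) of the facets of the
clique complex `Δ(G)`. -/
def FacetEnum {V : Type*} (G : SimpleGraph V) (F : ℕ → Finset V) (r : ℕ) : Prop :=
  (∀ i, i < r → IsFacet G (F i)) ∧
  (∀ s : Finset V, IsFacet G s → ∃ i, i < r ∧ F i = s) ∧
  (∀ i j, i < r → j < r → F i = F j → i = j)

/-- Let `G` be a connected closed graph on `[n]` whose clique complex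
has facets the intervals `F i = [m i, M i]` with `1 = m 0 < m 1 < … < m (r-1)`,
`M 0 < … < M (r-1) = n`, `m i < M i` and `m (i+1) ≤ M i`. Then `Δ(G)` is a linear
quasi-tree for the order `F 0, …, F (r-1)`: each `F i` is a leaf of
`⟨F i, …, F (r-1)⟩` and `F (i+1)` is its only branch. -/
theorem stmt6 (n r : ℕ) (hr : 1 ≤ r) (G : SimpleGraph ℕ) (hconn : G.Connected)
    (m M : ℕ → ℕ)
    (hm0 : m 0 = 1) (hMr : M (r - 1) = n)
    (hm : ∀ i, i + 1 < r → m i < m (i + 1))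
    (hM : ∀ i, i + 1 < r → M i < M (i + 1))
    (hmM : ∀ i, i < r → m i < M i)
    (hcons : ∀ i, i + 1 < r → m (i + 1) ≤ M i)
    (hfac : FacetEnum G (fun i => Finset.Icc (m i) (M i)) r) :
    LinearQuasiTree (fun i => Finset.Icc (m i) (M i)) r := by

  have hmono : ∀ a b, a < b → b < r → m a < m b := by
    intro a b hab hbr
    induction b with
    | zero => omega
    | succ b ih =>
      rcases Nat.lt_succ_iff_lt_or_eq.mp hab with h | h
      · exact lt_trans (ih h (by omega)) (hm b hbr)
      · subst h; exact hm a hbr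
  have hMmono : ∀ a b, a < b → b < r → M a < M b := by
    intro a b hab hbr
    induction b with
    | zero => omega
    | succ b ih =>
      rcases Nat.lt_succ_iff_lt_or_eq.mp hab with h | h
      · exact lt_trans (ih h (by omega)) (hM b hbr)
      · subst h; exact hM a hbr
  intro i hi
  constructor
  · refine ⟨by omega, hi, by omega, ?_⟩
    intro j hij hjr hji hjb
    have hj : i + 2 ≤ j := by omega
    have h1 : m (i + 1) < m j := hmono (i + 1) j (by omega) hjr
    have h2 : M i < M (i + 1) := hM i hi
    intro x hx
    simp only [Finset.mem_inter, Finset.mem_Icc] at hx ⊢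
    omega
  · rintro b ⟨hib, hbr, hbi, hb⟩
    by_contra hne
    have hb2 : i + 2 ≤ b := by omega
    have hsub := hb (i + 1) (by omega) hi (by omega) (fun h => hne h.symm)
    have hmem : m (i + 1) ∈ Finset.Icc (m (i + 1)) (M (i + 1)) ∩ Finset.Icc (m i) (M i) := by
      simp only [Finset.mem_inter, Finset.mem_Icc]
      have h1 : m i < m (i + 1) := hm i hi
      have h2 : m (i + 1) < M (i + 1) := hmM (i + 1) hi
      have h3 : m (i + 1) ≤ M i := hcons i hi
      omega
    have := hsub hmem
    simp only [Finset.mem_inter, Finset.mem_Icc] at this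
    have h4 : m (i + 1) < m b := hmono (i + 1) b (by omega) hbr
    omega
end

section
/- Let Δ = ⟨F_1,...,F_r⟩ be a linear quasi-tree with the given leaf order. Then for all 1 ≤ i < j ≤ r, F_i ∩ F_j = F_i ∩ F_{i+1} ∩ ... ∩ F_j. In particular F_k ∩ F_ℓ ⊇ F_i ∩ F_j for all i ≤ k ≤ ℓ ≤ j. -/
private lemma stmt7_key {V : Type*} [DecidableEq V] (F : ℕ → Finset V) (r : ℕ)
    (hlqt : LinearQuasiTree F r) :
    ∀ d i j, j = i + d → i < j → j < r → ∀ v, v ∈ F i → v ∈ F j →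
      ∀ k, i ≤ k → k ≤ j → v ∈ F k := by
  intro d
  induction d with
  | zero => omega
  | succ d ih =>
    intro i j hd hij hjr v hvi hvj k hik hkj
    rcases Nat.eq_or_lt_of_le hik with h | h
    · subst h; exact hvi
    rcases Nat.eq_or_lt_of_le hkj with h' | h'
    · subst h'; exact hvj
    -- so i < k < j, hence j ≥ i+2, i+1 < r
    have hir : i + 1 < r := by omega
    obtain ⟨⟨_, _, _, hbr⟩, _⟩ := hlqt i hir
    have hv1 : v ∈ F (i+1) := by
      have := hbr j (by omega) hjr (by omega) (by omega)
        (Finset.mem_inter.mpr ⟨hvj, hvi⟩)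
      exact (Finset.mem_inter.mp this).1
    exact ih (i+1) j (by omega) (by omega) hjr v hv1 hvj k (by omega) hkj

/-- If `⟨F 0, …, F (r-1)⟩` is a linear quasi-tree with the given leaf
order, then for all `i < j < r` one has `F i ∩ F j = F i ∩ F (i+1) ∩ … ∩ F j`;
in particular `F i ∩ F j ⊆ F k ∩ F l` for all `i ≤ k ≤ l ≤ j`. -/
theorem stmt7 {V : Type*} [DecidableEq V] (F : ℕ → Finset V) (r : ℕ)
    (hlqt : LinearQuasiTree F r) (i j : ℕ) (hij : i < j) (hjr : j < r) :
    (∀ v, v ∈ F i ∩ F j ↔ ∀ k, i ≤ k → k ≤ j → v ∈ F k) ∧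
    (∀ k l, i ≤ k → k ≤ l → l ≤ j → F i ∩ F j ⊆ F k ∩ F l) := by
  have key := stmt7_key F r hlqt (j - i) i j (by omega) hij hjr
  constructor
  · intro v
    constructor
    · intro hv
      obtain ⟨hvi, hvj⟩ := Finset.mem_inter.mp hv
      exact key v hvi hvj
    · intro h
      exact Finset.mem_inter.mpr ⟨h i le_rfl (le_of_lt hij), h j (le_of_lt hij) le_rfl⟩
  · intro k l hik hkl hlj v hv
    obtain ⟨hvi, hvj⟩ := Finset.mem_inter.mp hv
    exact Finset.mem_inter.mpr ⟨key v hvi hvj k hik (by omega), key v hvi hvj l (by omega) hlj⟩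
end

section
/- Let Δ = ⟨F_1,...,F_r⟩ be a linear quasi-tree and set n_i = max{j ∈ [r] : F_i ∩ F_j ≠ ∅}. Then n_1 ≤ n_2 ≤ ... ≤ n_r, and every set F_{i,j} = F_i ∩ F_j appearing in the list B = {F_{1,1},...,F_{1,n_1}, F_{2,n_1},...,F_{2,n_2},...,F_{r,r}} is nonempty. -/
lemma inter_subset_between {V : Type*} [DecidableEq V] (F : ℕ → Finset V) (r : ℕ)
    (hlqt : LinearQuasiTree F r) :
    ∀ d i j, i + d ≤ j → j < r → F i ∩ F j ⊆ F (i + d) := by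
  intro d
  induction d with
  | zero => intro i j _ _; simpa using Finset.inter_subset_left
  | succ d ih =>
    intro i j hij hjr
    have h1 : F i ∩ F j ⊆ F (i + d) := ih i j (by omega) hjr
    have hbr := (hlqt (i + d) (by omega)).1
    by_cases hj : j = i + d + 1
    · subst hj; exact fun x hx => (Finset.mem_inter.mp hx).2
    · have h2 := hbr.2.2.2 j (by omega) hjr (by omega) hj
      intro x hx
      have hxk : x ∈ F j ∩ F (i + d) :=
        Finset.mem_inter.mpr ⟨(Finset.mem_inter.mp hx).2, h1 hx⟩
      exact (Finset.mem_inter.mp (h2 hxk)).1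

/-- Let `⟨F 0, …, F (r-1)⟩` be a linear quasi-tree and let
`nmax i = max {j ∈ [r] : F i ∩ F j ≠ ∅}`. Then `nmax 0 ≤ nmax 1 ≤ … ≤ nmax (r-1)`,
and every intersection `F i ∩ F j` occurring in the list
`B = {F_{0,0}, …, F_{0,nmax 0}, F_{1,nmax 0}, …, F_{1,nmax 1}, …, F_{r-1,r-1}}`
is nonempty. -/
theorem stmt8 {V : Type*} [DecidableEq V] (F : ℕ → Finset V) (r : ℕ) (hr : 1 ≤ r)
    (hlqt : LinearQuasiTree F r) (hne : ∀ i, i < r → (F i).Nonempty)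
    (nmax : ℕ → ℕ)
    (hnmax : ∀ i, i < r → IsGreatest {j | j < r ∧ (F i ∩ F j).Nonempty} (nmax i)) :
    (∀ i, i + 1 < r → nmax i ≤ nmax (i + 1)) ∧
    (∀ i j, i < r → i ≤ j → j ≤ nmax i → (i = 0 ∨ nmax (i - 1) ≤ j) →
      (F i ∩ F j).Nonempty) := by
  constructor
  · intro i hi
    have h1 := hnmax i (by omega)
    have h2 := hnmax (i + 1) hi
    by_cases h : nmax i ≤ i + 1
    · have : i + 1 ≤ nmax (i + 1) := h2.2 ⟨hi, by simpa using hne (i + 1) hi⟩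
      omega
    · have hir : i ≤ nmax i := h1.2 ⟨by omega, by simpa using hne i (by omega)⟩
      obtain ⟨x, hx⟩ := h1.1.2
      have hsub := inter_subset_between F r hlqt 1 i (nmax i) (by omega) h1.1.1
      exact h2.2 ⟨h1.1.1,
        ⟨x, Finset.mem_inter.mpr ⟨hsub hx, (Finset.mem_inter.mp hx).2⟩⟩⟩
  · intro i j hir hij hjn _
    have h1 := hnmax i hir
    obtain ⟨x, hx⟩ := h1.1.2
    have hsub := inter_subset_between F r hlqt (j - i) i (nmax i) (by omega) h1.1.1
    rw [Nat.add_sub_cancel' hij] at hsub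
    exact ⟨x, Finset.mem_inter.mpr ⟨(Finset.mem_inter.mp hx).1, hsub hx⟩⟩
end

section
/- Let G be a closed graph. Then its clique complex Δ(G) is a closed complex: with the leaf order F_1,...,F_r coming from the interval structure of the facets, (I) F_{i,j} and F_{k,ℓ} are incomparable under inclusion (and both nonempty implies neither contains the other) whenever i < k and j < ℓ, and (C) F_{i+1,i+d} = F_{i,i+d} ∪ F_{i+1,i+d+1} whenever F_{i,i+d+1} ≠ ∅ with d ≥ 1. -/
/-- A closed linear quasi-tree: a linear quasi-tree satisfying the incomparability
condition (I) and the covering condition (C). -/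
def ClosedLQT {V : Type*} [DecidableEq V] (F : ℕ → Finset V) (r : ℕ) : Prop :=
  LinearQuasiTree F r ∧
  -- (I) incomparability
  (∀ i j k l, i ≤ j → k ≤ l → i < k → j < l → j < r → l < r →
    (F i ∩ F j).Nonempty → (F k ∩ F l).Nonempty →
    ¬ F i ∩ F j ⊆ F k ∩ F l ∧ ¬ F k ∩ F l ⊆ F i ∩ F j) ∧
  -- (C) covering
  (∀ i d, 1 ≤ d → i + d + 1 < r → (F i ∩ F (i + d + 1)).Nonempty →
    F (i + 1) ∩ F (i + d) = (F i ∩ F (i + d)) ∪ (F (i + 1) ∩ F (i + d + 1)))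

/-- Let `G` be a connected closed graph on `[n]`, so that the facets of
`Δ(G)` are the intervals `F i = [m i, M i]` with the leaf order coming from the interval
structure. Then `Δ(G)` is a closed complex: it is a linear quasi-tree satisfying the
incomparability condition (I) (`F_{i,j}` and `F_{k,l}` are incomparable whenever both are
nonempty and `i < k`, `j < l`) and the covering condition (C)
(`F_{i+1,i+d} = F_{i,i+d} ∪ F_{i+1,i+d+1}` whenever `F_{i,i+d+1} ≠ ∅`, `d ≥ 1`). -/
theorem stmt9 (n r : ℕ) (hr : 1 ≤ r) (G : SimpleGraph ℕ) (hconn : G.Connected)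
    (m M : ℕ → ℕ)
    (hm0 : m 0 = 1) (hMr : M (r - 1) = n)
    (hm : ∀ i, i + 1 < r → m i < m (i + 1))
    (hM : ∀ i, i + 1 < r → M i < M (i + 1))
    (hmM : ∀ i, i < r → m i < M i)
    (hcons : ∀ i, i + 1 < r → m (i + 1) ≤ M i)
    (hfac : FacetEnum G (fun i => Finset.Icc (m i) (M i)) r) :
    ClosedLQT (fun i => Finset.Icc (m i) (M i)) r := by
  have mlt : ∀ i j, i < j → j < r → m i < m j := by
    intro i j hij hjr
    induction j with
    | zero => omega
    | succ k ih =>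
      rcases Nat.lt_succ_iff_lt_or_eq.mp hij with h | h
      · exact (ih h (by omega)).trans (hm k (by omega))
      · subst h; exact hm i (by omega)
  have Mlt : ∀ i j, i < j → j < r → M i < M j := by
    intro i j hij hjr
    induction j with
    | zero => omega
    | succ k ih =>
      rcases Nat.lt_succ_iff_lt_or_eq.mp hij with h | h
      · exact (ih h (by omega)).trans (hM k (by omega))
      · subst h; exact hM i (by omega)
  have mle : ∀ i j, i ≤ j → j < r → m i ≤ m j := by
    intro i j hij hjr
    rcases eq_or_lt_of_le hij with h | h
    · exact h ▸ le_rfl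
    · exact (mlt i j h hjr).le
  have Mle : ∀ i j, i ≤ j → j < r → M i ≤ M j := by
    intro i j hij hjr
    rcases eq_or_lt_of_le hij with h | h
    · exact h ▸ le_rfl
    · exact (Mlt i j h hjr).le
  refine ⟨?_, ?_, ?_⟩
  · intro i hi
    constructor
    · refine ⟨Nat.le_succ i, hi, by omega, ?_⟩
      intro j hj1 hj2 hj3 hj4 x hx
      simp only [Finset.mem_inter, Finset.mem_Icc] at hx ⊢
      have h1 : m (i+1) ≤ m j := mle _ _ (by omega) hj2
      have h2 : M i ≤ M (i+1) := (Mlt i (i+1) (by omega) hi).le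
      omega
    · intro b hb
      by_contra hne
      obtain ⟨hb1, hb2, hb3, hb4⟩ := hb
      have hbge : i + 2 ≤ b := by omega
      have h := hb4 (i+1) (by omega) (by omega) (by omega) (by omega)
      have hmem : m (i+1) ∈ Finset.Icc (m (i+1)) (M (i+1)) ∩ Finset.Icc (m i) (M i) := by
        simp only [Finset.mem_inter, Finset.mem_Icc]
        have h1 := hcons i hi
        have h2 := mle i (i+1) (by omega) hi
        have h3 := hmM (i+1) hi
        omega
      have h4 := h hmem
      simp only [Finset.mem_inter, Finset.mem_Icc] at h4
      have h5 : m (i+1) < m b := mlt (i+1) b (by omega) hb2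
      omega
  · intro i j k l hij hkl hik hjl hjr hlr h1 h2
    obtain ⟨x, hx⟩ := h1
    obtain ⟨y, hy⟩ := h2
    simp only [Finset.mem_inter, Finset.mem_Icc] at hx hy
    have hmij : m i ≤ m j := mle _ _ hij hjr
    have hmjl : m j < m l := mlt _ _ hjl hlr
    have hMik : M i < M k := Mlt _ _ hik (by omega)
    have hMkl : M k ≤ M l := Mle _ _ hkl hlr
    constructor
    · intro hsub
      have hmem : m j ∈ Finset.Icc (m i) (M i) ∩ Finset.Icc (m j) (M j) := by
        simp only [Finset.mem_inter, Finset.mem_Icc]; omega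
      have := hsub hmem
      simp only [Finset.mem_inter, Finset.mem_Icc] at this
      omega
    · intro hsub
      have hmem : M k ∈ Finset.Icc (m k) (M k) ∩ Finset.Icc (m l) (M l) := by
        simp only [Finset.mem_inter, Finset.mem_Icc]; omega
      have := hsub hmem
      simp only [Finset.mem_inter, Finset.mem_Icc] at this
      omega
  · intro i d hd hlt hne
    obtain ⟨z, hz⟩ := hne
    simp only [Finset.mem_inter, Finset.mem_Icc] at hz
    have h1 : m (i+1) ≤ m (i+d) := mle _ _ (by omega) (by omega)
    have h2 : m (i+d) < m (i+d+1) := mlt _ _ (by omega) (by omega)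
    have h3 : M i < M (i+1) := Mlt _ _ (by omega) (by omega)
    have h4 : M (i+1) ≤ M (i+d) := Mle _ _ (by omega) (by omega)
    have h5 : m i ≤ m (i+1) := mle _ _ (by omega) (by omega)
    have h6 : M (i+1) ≤ M (i+d+1) := Mle _ _ (by omega) (by omega)
    ext x
    simp only [Finset.mem_inter, Finset.mem_union, Finset.mem_Icc]
    omega
end

section
/- Let Δ = ⟨F_1,...,F_r⟩ be a closed linear quasi-tree and suppose F_i ∩ F_j ≠ ∅ for some i ≤ j. Then F_i ∪ F_j = F_i ∪ F_{i+1} ∪ ... ∪ F_j; moreover this union equals (⋃_{k=i}^{j-1} F_{i,k}) ∪ (⋃_{k=i+1}^{j} F_{k,j}) ∪ F_{i,j}. -/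
section Aux
variable {V : Type*} [DecidableEq V] (F : ℕ → Finset V) (r : ℕ)

lemma chain_lemma (hq : LinearQuasiTree F r) :
    ∀ i k j, i ≤ k → k ≤ j → j < r → F i ∩ F j ⊆ F k ∩ F j := by
  intro i k j hik
  induction k, hik using Nat.le_induction with
  | base => intro _ _; exact fun x hx => hx
  | succ k hik ih =>
    intro hkj hjr
    have hkj' : k ≤ j := by omega
    have h1 : F i ∩ F j ⊆ F k ∩ F j := ih hkj' hjr
    rcases eq_or_lt_of_le hkj with heq | hlt
    · -- k + 1 = j
      intro x hx
      have hx' := h1 hx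
      simp only [Finset.mem_inter] at hx' ⊢
      refine ⟨?_, hx'.2⟩; rw [heq]; exact hx'.2
    · -- k + 1 < j : use branch at k
      have hkr : k + 1 < r := by omega
      obtain ⟨⟨_, _, _, hb⟩, _⟩ := hq k hkr
      have hsub := hb j (by omega) hjr (by omega) (by omega)
      intro x hx
      have hx' := h1 hx
      simp only [Finset.mem_inter] at hx' ⊢
      have := hsub (by simp only [Finset.mem_inter]; exact ⟨hx'.2, hx'.1⟩)
      simp only [Finset.mem_inter] at this
      exact ⟨this.1, hx'.2⟩

lemma descent_step (hc : ClosedLQT F r) (i m : ℕ) (him : i ≤ m) (hmr : m + 1 < r)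
    (hne : (F i ∩ F (m + 1)).Nonempty) : (F i ∩ F m).Nonempty := by
  obtain ⟨hq, hI, hC⟩ := hc
  rcases eq_or_lt_of_le him with heq | hlt
  · subst heq
    exact hne.mono (fun x hx => by
      simp only [Finset.mem_inter] at hx ⊢; exact ⟨hx.1, hx.1⟩)
  · rcases eq_or_lt_of_le (Nat.succ_le_of_lt hlt) with heq | hlt2
    · -- i + 1 = m : branch at i
      have hir : i + 1 < r := by omega
      obtain ⟨⟨_, _, _, hb⟩, _⟩ := hq i hir
      have hsub := hb (m + 1) (by omega) hmr (by omega) (by omega)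
      refine hne.mono (fun x hx => ?_)
      have := hsub (by simp only [Finset.mem_inter] at hx ⊢; exact ⟨hx.2, hx.1⟩)
      simp only [Finset.mem_inter] at this ⊢
      exact ⟨this.2, heq ▸ this.1⟩
    · -- i + 1 < m
      by_contra hemp
      rw [Finset.not_nonempty_iff_eq_empty] at hemp
      set d := m - i with hd
      have hdm : i + d = m := by omega
      have hd1 : 1 ≤ d := by omega
      have hCeq := hC i d hd1 (by omega) (by rw [show i + d + 1 = m + 1 by omega]; exact hne)
      rw [hdm, hemp, Finset.empty_union] at hCeq
      -- F(i+1) ∩ F m = F(i+1) ∩ F(m+1)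
      have hne1 : (F (i + 1) ∩ F (m + 1)).Nonempty :=
        hne.mono (chain_lemma F r hq i (i + 1) (m + 1) (by omega) (by omega) hmr)
      have hne2 : (F (i + 2) ∩ F (m + 1)).Nonempty :=
        hne1.mono (chain_lemma F r hq (i + 1) (i + 2) (m + 1) (by omega) (by omega) hmr)
      have hsub : F (i + 1) ∩ F m ⊆ F (i + 2) ∩ F (m + 1) := by
        rw [hCeq]
        exact chain_lemma F r hq (i + 1) (i + 2) (m + 1) (by omega) (by omega) hmr
      have := hI (i + 1) m (i + 2) (m + 1) (by omega) (by omega) (by omega) (by omega)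
        (by omega) hmr (by rw [hCeq]; exact hne1) hne2
      exact this.1 hsub

lemma descent (hc : ClosedLQT F r) (i k : ℕ) :
    ∀ j, k ≤ j → j < r → i ≤ k → (F i ∩ F j).Nonempty → (F i ∩ F k).Nonempty := by
  intro j hkj
  induction j, hkj using Nat.le_induction with
  | base => intro _ _ h; exact h
  | succ j hkj ih =>
    intro hjr hik hne
    exact ih (by omega) hik (descent_step F r hc i j (by omega) hjr hne)

lemma tele (hc : ClosedLQT F r) (i j : ℕ) (hij : i + 1 < j) (hjr : j < r)
    (hne : (F i ∩ F j).Nonempty) : F (i + 1) ⊆ F i ∪ F j := by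
  have hq := hc.1
  have hC := hc.2.2
  have key : ∀ m, i + 2 ≤ m → m ≤ j → F (i + 1) ⊆ F i ∪ (F (i + 1) ∩ F m) := by
    intro m him
    induction m, him using Nat.le_induction with
    | base =>
      intro hmj
      have hne2 : (F i ∩ F (i + 2)).Nonempty :=
        descent F r hc i (i + 2) j hmj hjr (by omega) hne
      have hCeq := hC i 1 le_rfl (by omega) (by rw [show i + 1 + 1 = i + 2 by omega]; exact hne2)
      rw [show i + 1 + 1 = i + 2 by omega] at hCeq
      simp only [Finset.inter_self] at hCeq
      rw [hCeq]
      intro x hx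
      simp only [Finset.mem_union, Finset.mem_inter] at hx ⊢
      tauto
    | succ m him ih =>
      intro hmj
      have h1 := ih (by omega)
      have hnem : (F i ∩ F (m + 1)).Nonempty :=
        descent F r hc i (m + 1) j hmj hjr (by omega) hne
      set d := m - i with hd
      have hdm : i + d = m := by omega
      have hCeq := hC i d (by omega) (by omega)
        (by rw [show i + d + 1 = m + 1 by omega]; exact hnem)
      rw [hdm] at hCeq
      intro x hx
      rcases Finset.mem_union.mp (h1 hx) with h | h
      · exact Finset.mem_union_left _ h
      · rw [hCeq] at h
        rcases Finset.mem_union.mp h with h | h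
        · exact Finset.mem_union_left _ (Finset.mem_of_mem_inter_left h)
        · exact Finset.mem_union_right _ h
  intro x hx
  rcases Finset.mem_union.mp (key j (by omega) le_rfl hx) with h | h
  · exact Finset.mem_union_left _ h
  · exact Finset.mem_union_right _ (Finset.mem_of_mem_inter_right h)

lemma main_lemma (hc : ClosedLQT F r) :
    ∀ d i j, j ≤ i + d → i ≤ j → j < r → (F i ∩ F j).Nonempty →
      ∀ k, i ≤ k → k ≤ j → F k ⊆ F i ∪ F j := by
  intro d
  induction d with
  | zero =>
    intro i j hji hij _ _ k hik hkj
    have : k = i := by omega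
    subst this
    exact Finset.subset_union_left
  | succ d ih =>
    intro i j hji hij hjr hne k hik hkj
    rcases Nat.lt_or_ge (i + d) j with hlt | hge
    · -- j = i + d + 1
      rcases eq_or_lt_of_le hik with heq | hlt1
      · subst heq; exact Finset.subset_union_left
      rcases eq_or_lt_of_le hkj with heq | hlt2
      · subst heq; exact Finset.subset_union_right
      -- i < k < j, so i + 1 < j
      have hij1 : i + 1 < j := by omega
      have h1 : F (i + 1) ⊆ F i ∪ F j := tele F r hc i j hij1 hjr hne
      have hne1 : (F (i + 1) ∩ F j).Nonempty :=
        hne.mono (chain_lemma F r hc.1 i (i + 1) j (by omega) (by omega) hjr)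
      have h2 := ih (i + 1) j (by omega) (by omega) hjr hne1 k (by omega) hkj
      intro x hx
      rcases Finset.mem_union.mp (h2 hx) with h | h
      · exact h1 h
      · exact Finset.mem_union_right _ h
    · exact ih i j hge hij hjr hne k hik hkj

end Aux

/-- Let `⟨F 0, …, F (r-1)⟩` be a closed linear quasi-tree and suppose
`F i ∩ F j ≠ ∅` for some `i ≤ j < r`. Then
`F i ∪ F j = F i ∪ F (i+1) ∪ … ∪ F j`, and this union also equals
`(⋃_{k=i}^{j-1} F i ∩ F k) ∪ (⋃_{k=i+1}^{j} F k ∩ F j) ∪ (F i ∩ F j)`. -/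
theorem stmt10 {V : Type*} [DecidableEq V] (F : ℕ → Finset V) (r : ℕ)
    (hc : ClosedLQT F r) (i j : ℕ) (hij : i ≤ j) (hjr : j < r)
    (hne : (F i ∩ F j).Nonempty) :
    (∀ v, v ∈ F i ∪ F j ↔ ∃ k, i ≤ k ∧ k ≤ j ∧ v ∈ F k) ∧
    (∀ v, v ∈ F i ∪ F j ↔
      (∃ k, i ≤ k ∧ k < j ∧ v ∈ F i ∩ F k) ∨
      (∃ k, i < k ∧ k ≤ j ∧ v ∈ F k ∩ F j) ∨ v ∈ F i ∩ F j) := by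
  constructor
  · intro v
    constructor
    · intro h
      rcases Finset.mem_union.mp h with h | h
      · exact ⟨i, le_rfl, hij, h⟩
      · exact ⟨j, hij, le_rfl, h⟩
    · rintro ⟨k, hik, hkj, hv⟩
      exact main_lemma F r hc j i j (by omega) hij hjr hne k hik hkj hv
  · intro v
    constructor
    · intro h
      rcases eq_or_lt_of_le hij with heq | hlt
      · subst heq
        refine Or.inr (Or.inr ?_)
        rcases Finset.mem_union.mp h with h | h <;>
          exact Finset.mem_inter.mpr ⟨h, h⟩
      · rcases Finset.mem_union.mp h with h | h
        · exact Or.inl ⟨i, le_rfl, hlt, Finset.mem_inter.mpr ⟨h, h⟩⟩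
        · exact Or.inr (Or.inl ⟨j, hlt, le_rfl, Finset.mem_inter.mpr ⟨h, h⟩⟩)
    · rintro (⟨k, _, _, hv⟩ | ⟨k, _, _, hv⟩ | hv)
      · exact Finset.mem_union_left _ (Finset.mem_of_mem_inter_left hv)
      · exact Finset.mem_union_right _ (Finset.mem_of_mem_inter_right hv)
      · exact Finset.mem_union_left _ (Finset.mem_of_mem_inter_left hv)
end

section
/- Let Δ(G) = ⟨F_1,...,F_r⟩ be a closed clique complex of a graph G, and for border elements F_{i,j} (those with F_{i-1,j+1} empty or undefined) set F'_{i,j} = F_{i,j} \ (F_{i-1,j} ∪ F_{i,j+1}). Then the family {F'_{i,j}} is a partition of V(G); moreover, for v ∈ F'_{i,j}, v belongs to a facet F_k if and only if i ≤ k ≤ j. -/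
/-- `F_{i,j} = F i ∩ F j` is a border element of the poset `P`, i.e. `F_{i-1,j+1}` is
empty or undefined (with the convention `F_{i,j} = ∅` if `i < 1` or `j > r`). -/
def Border {V : Type*} [DecidableEq V] (F : ℕ → Finset V) (r i j : ℕ) : Prop :=
  i ≤ j ∧ j < r ∧ (i = 0 ∨ j + 1 = r ∨ F (i - 1) ∩ F (j + 1) = ∅)

/-- `F'_{i,j} = F_{i,j} \ (F_{i-1,j} ∪ F_{i,j+1})`, with the convention that the
out-of-range intersections are empty. -/
def Fblock {V : Type*} [DecidableEq V] (F : ℕ → Finset V) (r i j : ℕ) : Finset V :=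
  (F i ∩ F j) \
    ((if i = 0 then ∅ else F (i - 1) ∩ F j) ∪ (if j + 1 < r then F i ∩ F (j + 1) else ∅))

lemma interval_mem {V : Type*} [DecidableEq V] {F : ℕ → Finset V} {r : ℕ}
    (h : LinearQuasiTree F r) {v : V} {i j : ℕ} (hj : j < r)
    (hvi : v ∈ F i) (hvj : v ∈ F j) : ∀ k, i ≤ k → k ≤ j → v ∈ F k := by
  intro k hik hkj
  induction k, hik using Nat.le_induction with
  | base => exact hvi
  | succ k hik ih =>
    have hk : v ∈ F k := ih (le_trans (Nat.le_succ k) hkj)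
    by_cases hjk : j = k + 1
    · rwa [hjk] at hvj
    · have hkr : k + 1 < r := lt_of_le_of_lt hkj hj
      have hb := (h k hkr).1.2.2.2 j (le_trans (Nat.le_succ k) hkj) hj
        (by omega) hjk
      have : v ∈ F (k+1) ∩ F k := hb (Finset.mem_inter.mpr ⟨hvj, hk⟩)
      exact (Finset.mem_inter.mp this).1

lemma exists_facet {V : Type*} [Fintype V] [DecidableEq V] (G : SimpleGraph V) (v : V) :
    ∃ s : Finset V, IsFacet G s ∧ v ∈ s := by
  classical
  set T : Finset (Finset V) :=
    Finset.univ.filter (fun s => G.IsClique (s : Set V) ∧ v ∈ s) with hT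
  have hvT : ({v} : Finset V) ∈ T := by
    simp [hT, Set.pairwise_singleton, SimpleGraph.IsClique]
  obtain ⟨s, hsT, hmax⟩ := T.exists_max_image Finset.card ⟨_, hvT⟩
  simp only [hT, Finset.mem_filter] at hsT
  refine ⟨s, ⟨hsT.2.1, ?_⟩, hsT.2.2⟩
  intro t ht hst
  have htT : t ∈ T := by
    simp only [hT, Finset.mem_filter]
    exact ⟨Finset.mem_univ _, ht, hst hsT.2.2⟩
  exact Finset.eq_of_subset_of_card_le hst (hmax t htT)

/-- Let `Δ(G) = ⟨F 0, …, F (r-1)⟩` be a closed clique complex of a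
graph `G`, and for border elements `F_{i,j}` set `F'_{i,j} = F_{i,j} \ (F_{i-1,j} ∪ F_{i,j+1})`.
Then the family `{F'_{i,j}}` over border pairs is a partition of `V(G)`; moreover, for
`v ∈ F'_{i,j}`, `v` belongs to a facet `F k` if and only if `i ≤ k ≤ j`. -/
theorem stmt11 {V : Type*} [Fintype V] [DecidableEq V] (G : SimpleGraph V)
    (F : ℕ → Finset V) (r : ℕ) (hfac : FacetEnum G F r) (hc : ClosedLQT F r) :
    (∀ v : V, ∃ i j, Border F r i j ∧ v ∈ Fblock F r i j) ∧
    (∀ i j k l, Border F r i j → Border F r k l → (i, j) ≠ (k, l) →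
      Disjoint (Fblock F r i j) (Fblock F r k l)) ∧
    (∀ i j, Border F r i j → ∀ v ∈ Fblock F r i j, ∀ k, k < r →
      (v ∈ F k ↔ i ≤ k ∧ k ≤ j)) := by
  classical
  obtain ⟨hmem, hsurj, hinj⟩ := hfac
  obtain ⟨hlqt, hI, hC⟩ := hc
  have part3 : ∀ i j, Border F r i j → ∀ v ∈ Fblock F r i j, ∀ k, k < r →
      (v ∈ F k ↔ i ≤ k ∧ k ≤ j) := by
    rintro i j ⟨hij, hjr, _⟩ v hv k hkr
    simp only [Fblock, Finset.mem_sdiff, Finset.mem_inter, Finset.mem_union] at hv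
    obtain ⟨⟨hvi, hvj⟩, hnot⟩ := hv
    constructor
    · intro hvk
      by_contra hcon
      rcases lt_or_ge k i with hki | hik
      · have hi0 : i ≠ 0 := by omega
        have hv1 : v ∈ F (i - 1) :=
          interval_mem hlqt hjr hvk hvj (i - 1) (by omega) (by omega)
        exact hnot (Or.inl (by
          rw [if_neg hi0]; exact Finset.mem_inter.mpr ⟨hv1, hvj⟩))
      · have hjk : j < k := by omega
        have hj1 : j + 1 < r := by omega
        have hv1 : v ∈ F (j + 1) :=
          interval_mem hlqt hkr hvi hvk (j + 1) (by omega) (by omega)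
        exact hnot (Or.inr (by
          rw [if_pos hj1]; exact Finset.mem_inter.mpr ⟨hvi, hv1⟩))
    · rintro ⟨h1, h2⟩
      exact interval_mem hlqt hjr hvi hvj k h1 h2
  refine ⟨?_, ?_, part3⟩
  · intro v
    obtain ⟨s, hs, hvs⟩ := exists_facet G v
    obtain ⟨m, hmr, hFm⟩ := hsurj s hs
    have hvm : v ∈ F m := by rw [hFm]; exact hvs
    set S : Finset ℕ := (Finset.range r).filter (fun n => v ∈ F n) with hS
    have hSne : S.Nonempty := ⟨m, by simp [hS, hmr, hvm]⟩
    set i := S.min' hSne with hi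
    set j := S.max' hSne with hj
    have hiS : i ∈ S := S.min'_mem hSne
    have hjS : j ∈ S := S.max'_mem hSne
    simp only [hS, Finset.mem_filter, Finset.mem_range] at hiS hjS
    have hij : i ≤ j := S.min'_le j (S.max'_mem hSne)
    have hnotlow : i ≠ 0 → v ∉ F (i - 1) := by
      intro hi0 hvv
      have : i - 1 ∈ S := by
        simp only [hS, Finset.mem_filter, Finset.mem_range]
        exact ⟨by omega, hvv⟩
      have := S.min'_le _ this
      omega
    have hnothigh : j + 1 < r → v ∉ F (j + 1) := by
      intro hjr hvv
      have : j + 1 ∈ S := by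
        simp only [hS, Finset.mem_filter, Finset.mem_range]
        exact ⟨hjr, hvv⟩
      have := S.le_max' _ this
      omega
    refine ⟨i, j, ⟨hij, hjS.1, ?_⟩, ?_⟩
    · by_cases hi0 : i = 0
      · exact Or.inl hi0
      by_cases hj1 : j + 1 = r
      · exact Or.inr (Or.inl hj1)
      refine Or.inr (Or.inr ?_)
      by_contra hne
      have hne' : (F (i - 1) ∩ F (j + 1)).Nonempty :=
        Finset.nonempty_iff_ne_empty.mpr hne
      have e1 : i - 1 + 1 = i := by omega
      have e2 : i - 1 + (j - i + 1) = j := by omega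
      have e3 : i - 1 + (j - i + 1) + 1 = j + 1 := by omega
      have hcov := hC (i - 1) (j - i + 1) (by omega) (by omega ) (by rw [e3]; exact hne')
      rw [e1, e2] at hcov
      have : v ∈ (F (i-1) ∩ F j) ∪ (F i ∩ F (j+1)) := by
        rw [← hcov]; exact Finset.mem_inter.mpr ⟨hiS.2, hjS.2⟩
      rcases Finset.mem_union.mp this with h | h
      · exact hnotlow hi0 (Finset.mem_inter.mp h).1
      · exact hnothigh (by omega) (Finset.mem_inter.mp h).2
    · simp only [Fblock, Finset.mem_sdiff, Finset.mem_inter, Finset.mem_union]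
      refine ⟨⟨hiS.2, hjS.2⟩, ?_⟩
      rintro (h | h)
      · by_cases hi0 : i = 0
        · rw [if_pos hi0] at h; exact absurd h (Finset.notMem_empty v)
        · rw [if_neg hi0] at h
          exact hnotlow hi0 (Finset.mem_inter.mp h).1
      · by_cases hj1 : j + 1 < r
        · rw [if_pos hj1] at h
          exact hnothigh hj1 (Finset.mem_inter.mp h).2
        · rw [if_neg hj1] at h; exact absurd h (Finset.notMem_empty v)
  · intro i j k l hb1 hb2 hne
    rw [Finset.disjoint_left]
    intro v hv1 hv2
    have p1 := part3 i j hb1 v hv1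
    have p2 := part3 k l hb2 v hv2
    obtain ⟨hij, hjr, _⟩ := hb1
    obtain ⟨hkl, hlr, _⟩ := hb2
    have hvi : v ∈ F i := ((p1 i (by omega)).mpr ⟨le_refl _, hij⟩)
    have hvj : v ∈ F j := ((p1 j hjr).mpr ⟨hij, le_refl _⟩)
    have hvk : v ∈ F k := ((p2 k (by omega)).mpr ⟨le_refl _, hkl⟩)
    have hvl : v ∈ F l := ((p2 l hlr).mpr ⟨hkl, le_refl _⟩)
    have h1 := (p1 k (by omega)).mp hvk
    have h2 := (p1 l hlr).mp hvl
    have h3 := (p2 i (by omega)).mp hvi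
    have h4 := (p2 j hjr).mp hvj
    apply hne
    have : i = k := le_antisymm h1.1 h3.1
    have : j = l := le_antisymm h4.2 h2.2
    simp_all
end

section
/- Let G be a graph whose clique complex Δ(G) is a closed linear quasi-tree with leaf order F_1,...,F_r. Define a total order on V(G) by fixing an arbitrary total order within each block F'_{i,j} of the partition from the border elements, and declaring u < v if u ∈ F'_{i,j}, v ∈ F'_{k,ℓ} with i < k, or i = k and j < ℓ. Then G is closed with respect to the resulting labelling. -/
/-- Let `G` be a graph whose clique complex `Δ(G) = ⟨F 0, …, F (r-1)⟩`
is a closed linear quasi-tree. Let `lt` be any strict total order of `V(G)` obtained by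
ordering the blocks `F'_{i,j}` of the partition given by the border elements
lexicographically in `(i,j)` (and arbitrarily within each block). Then `G` is closed
with respect to the resulting labelling. -/
theorem stmt12 {V : Type*} [Fintype V] [DecidableEq V] (G : SimpleGraph V)
    (F : ℕ → Finset V) (r : ℕ) (hfac : FacetEnum G F r) (hc : ClosedLQT F r)
    (lt : V → V → Prop) (hto : IsStrictTotalOrder V lt)
    (hcompat : ∀ u v i j k l, Border F r i j → Border F r k l →
      u ∈ Fblock F r i j → v ∈ Fblock F r k l →
      (i < k ∨ (i = k ∧ j < l)) → lt u v) :
    ClosedWrt G lt := by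
  classical
  haveI : IsStrictTotalOrder V lt := hto
  obtain ⟨hfac1, hfac2, _⟩ := hfac
  obtain ⟨hlqt, _, hC⟩ := hc
  -- every clique extends to a facet
  have hext : ∀ s : Finset V, G.IsClique (s : Set V) → ∃ t, IsFacet G t ∧ s ⊆ t := by
    intro s hs
    have hfin : {t : Finset V | G.IsClique (t : Set V) ∧ s ⊆ t}.Finite := Set.toFinite _
    have hne : {t : Finset V | G.IsClique (t : Set V) ∧ s ⊆ t}.Nonempty := ⟨s, hs, subset_rfl⟩
    obtain ⟨t, ⟨ht, hst⟩, hmax⟩ := hfin.exists_maximalFor (fun t => t.card) _ hne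
    refine ⟨t, ⟨ht, ?_⟩, hst⟩
    intro u hu htu
    exact Finset.eq_of_subset_of_card_le htu
      (hmax ⟨hu, hst.trans htu⟩ (Finset.card_le_card htu))
  set S : V → Set ℕ := fun v => {m | m < r ∧ v ∈ F m} with hS
  have hSne : ∀ v, (S v).Nonempty := by
    intro v
    have hclique : G.IsClique (({v} : Finset V) : Set V) := by
      simp [SimpleGraph.isClique_iff]
    obtain ⟨t, htf, hvt⟩ := hext {v} hclique
    obtain ⟨m, hm, hFm⟩ := hfac2 t htf
    exact ⟨m, hm, by rw [hFm]; exact hvt (Finset.mem_singleton_self v)⟩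
  have hSbdd : ∀ v, BddAbove (S v) := fun v => ⟨r, fun m hm => hm.1.le⟩
  set A : V → ℕ := fun v => sInf (S v) with hA
  set B : V → ℕ := fun v => sSup (S v) with hB
  have hAmem : ∀ v, A v < r ∧ v ∈ F (A v) := fun v => Nat.sInf_mem (hSne v)
  have hBmem : ∀ v, B v < r ∧ v ∈ F (B v) := fun v => Nat.sSup_mem (hSne v) (hSbdd v)
  have hAle : ∀ v m, m < r → v ∈ F m → A v ≤ m := fun v m h1 h2 => Nat.sInf_le ⟨h1, h2⟩
  have hleB : ∀ v m, m < r → v ∈ F m → m ≤ B v := fun v m h1 h2 =>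
    le_csSup (hSbdd v) ⟨h1, h2⟩
  have hAB : ∀ v, A v ≤ B v := fun v => hAle v (B v) (hBmem v).1 (hBmem v).2
  -- interval property
  have hstep : ∀ (v : V) i j, i < j → j < r → v ∈ F i → v ∈ F j → v ∈ F (i + 1) := by
    intro v i j hij hjr hvi hvj
    rcases eq_or_lt_of_le (Nat.succ_le_of_lt hij) with h | h
    · rw [show i + 1 = j from h]; exact hvj
    · have h1 : i + 1 < r := lt_trans h hjr
      obtain ⟨hb, -⟩ := hlqt i h1
      have := hb.2.2.2 j (le_of_lt hij) hjr (Nat.ne_of_gt hij) (Nat.ne_of_gt h)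
        (Finset.mem_inter.mpr ⟨hvj, hvi⟩)
      exact (Finset.mem_inter.mp this).1
  have hint : ∀ (v : V) i j m, i ≤ m → m ≤ j → j < r → v ∈ F i → v ∈ F j → v ∈ F m := by
    intro v i j m him hmj hjr hvi hvj
    induction m, him using Nat.le_induction with
    | base => exact hvi
    | succ n hn ih =>
      exact hstep v n j (by omega) hjr (ih (by omega)) hvj
  -- block membership
  have hblock : ∀ v, v ∈ Fblock F r (A v) (B v) := by
    intro v
    rw [Fblock, Finset.mem_sdiff]
    refine ⟨Finset.mem_inter.mpr ⟨(hAmem v).2, (hBmem v).2⟩, ?_⟩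
    rw [Finset.mem_union]
    rintro (h | h)
    · split_ifs at h with h0
      · exact Finset.notMem_empty v h
      · have h1 := (hAmem v).1
        have := hAle v (A v - 1) (by omega) (Finset.mem_inter.mp h).1
        omega
    · split_ifs at h with h0
      · have := hleB v (B v + 1) h0 (Finset.mem_inter.mp h).2
        omega
      · exact Finset.notMem_empty v h
  -- border property
  have hborder : ∀ v, Border F r (A v) (B v) := by
    intro v
    refine ⟨hAB v, (hBmem v).1, ?_⟩
    by_cases h0 : A v = 0
    · exact Or.inl h0
    by_cases hr : B v + 1 = r
    · exact Or.inr (Or.inl hr)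
    refine Or.inr (Or.inr ?_)
    by_contra hne'
    obtain ⟨w, hw⟩ := Finset.nonempty_iff_ne_empty.mpr hne'
    have hab := hAB v
    have har := (hAmem v).1
    have hbr := (hBmem v).1
    have e1 : (A v - 1) + 1 = A v := by omega
    have e2 : (A v - 1) + (B v - A v + 1) = B v := by omega
    have e3 : (A v - 1) + (B v - A v + 1) + 1 = B v + 1 := by omega
    have hcov := hC (A v - 1) (B v - A v + 1) (by omega)
      (by rw [e3]; omega)
      (by rw [e3]; exact ⟨w, hw⟩)
    rw [e2, e1] at hcov
    have hv : v ∈ (F (A v - 1) ∩ F (B v)) ∪ (F (A v) ∩ F (B v + 1)) := by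
      rw [← hcov]; exact Finset.mem_inter.mpr ⟨(hAmem v).2, (hBmem v).2⟩
    rcases Finset.mem_union.mp hv with h | h
    · have := hAle v (A v - 1) (by have := (hAmem v).1; omega) (Finset.mem_inter.mp h).1
      omega
    · have := hleB v (B v + 1) (by have := (hBmem v).1; omega) (Finset.mem_inter.mp h).2
      omega
  -- staircase
  have hstair : ∀ u v : V, A u < A v → B u ≤ B v := by
    intro u v h
    by_contra hlt'
    push_neg at hlt'
    have h1 : u ∈ F (A v - 1) :=
      hint u (A u) (B u) (A v - 1) (by omega) (by have := hAB v; omega) (hBmem u).1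
        (hAmem u).2 (hBmem u).2
    have h2 : u ∈ F (B v + 1) :=
      hint u (A u) (B u) (B v + 1) (by have := hAB u; have := hAB v; omega) (by omega)
        (hBmem u).1 (hAmem u).2 (hBmem u).2
    rcases (hborder v).2.2 with h0 | hr | hemp
    · omega
    · have := (hBmem u).1; omega
    · have : u ∈ F (A v - 1) ∩ F (B v + 1) := Finset.mem_inter.mpr ⟨h1, h2⟩
      rw [hemp] at this
      exact Finset.notMem_empty u this
  -- comparison gives lex order
  have hlex : ∀ u v : V, lt u v → A u < A v ∨ (A u = A v ∧ B u ≤ B v) := by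
    intro u v huv
    by_contra h
    push_neg at h
    have hcase : A v < A u ∨ (A v = A u ∧ B v < B u) := by omega
    have hvu : lt v u :=
      hcompat v u (A v) (B v) (A u) (B u) (hborder v) (hborder u) (hblock v) (hblock u) hcase
    exact irrefl_of lt u (trans_of lt huv hvu)
  -- adjacency implies interval overlap
  have hadj_ov : ∀ u v : V, G.Adj u v → A u ≤ B v ∧ A v ≤ B u := by
    intro u v huv
    have hcl : G.IsClique (({u, v} : Finset V) : Set V) := by
      rw [Finset.coe_insert, Finset.coe_singleton]
      exact SimpleGraph.isClique_pair.mpr fun _ => huv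
    obtain ⟨t, htf, hst⟩ := hext {u, v} hcl
    obtain ⟨m, hm, hFm⟩ := hfac2 t htf
    have hu : u ∈ F m := by rw [hFm]; exact hst (by simp)
    have hv : v ∈ F m := by rw [hFm]; exact hst (by simp)
    exact ⟨le_trans (hAle u m hm hu) (hleB v m hm hv),
           le_trans (hAle v m hm hv) (hleB u m hm hu)⟩
  -- interval overlap implies adjacency
  have hov_adj : ∀ u v : V, u ≠ v → A u ≤ B v → A v ≤ B u → G.Adj u v := by
    intro u v hne h1 h2
    set m := max (A u) (A v) with hm
    have hmr : m < r :=
      max_lt (lt_of_le_of_lt (hAB u) (hBmem u).1) (lt_of_le_of_lt (hAB v) (hBmem v).1)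
    have hu : u ∈ F m :=
      hint u (A u) (B u) m (le_max_left _ _) (max_le (hAB u) h2) (hBmem u).1
        (hAmem u).2 (hBmem u).2
    have hv : v ∈ F m :=
      hint v (A v) (B v) m (le_max_right _ _) (max_le h1 (hAB v)) (hBmem v).1
        (hAmem v).2 (hBmem v).2
    exact (hfac1 m hmr).1 (Finset.mem_coe.mpr hu) (Finset.mem_coe.mpr hv) hne
  -- conclusion
  intro x y z hxy hxz hyz
  have o1 := hadj_ov x y hxy
  have o2 := hadj_ov x z hxz
  constructor
  · intro h1 h2
    have l1 := hlex x y h1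
    have l2 := hlex x z h2
    have hbxby : B x ≤ B y := by
      rcases l1 with h | h
      · exact hstair x y h
      · omega
    have hbxbz : B x ≤ B z := by
      rcases l2 with h | h
      · exact hstair x z h
      · omega
    exact hov_adj y z hyz (by omega) (by omega)
  · intro h1 h2
    have l1 := hlex y x h1
    have l2 := hlex z x h2
    exact hov_adj y z hyz (by omega) (by omega)
end

section
/- A graph G is closed (with respect to some labelling) if and only if each connected component of G is closed. -/
/-- A graph `G` is closed (with respect to some labelling) if and only
if each connected component of `G` is closed. -/
theorem stmt14 {V : Type*} [Fintype V] (G : SimpleGraph V) :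
    (∃ ℓ : V ↪ ℕ, ClosedWrt G (fun a b => ℓ a < ℓ b)) ↔
      ∀ c : G.ConnectedComponent, ∃ ℓ : c.supp ↪ ℕ,
        ClosedWrt (G.induce c.supp) (fun a b => ℓ a < ℓ b) := by
  constructor
  · rintro ⟨ℓ, hℓ⟩ c
    refine ⟨⟨fun v => ℓ v, fun a b h => Subtype.ext (ℓ.injective h)⟩, ?_⟩
    intro i j k hij hik hjk
    exact hℓ i j k hij hik (fun h => hjk (Subtype.ext h))
  · intro h
    classical
    choose L hL using h
    have hcount : ∃ F : G.ConnectedComponent → ℕ, Function.Injective F :=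
      Countable.exists_injective_nat _
    obtain ⟨F, hF⟩ := hcount
    set g : ∀ d : G.ConnectedComponent, ∀ v : V, v ∈ d.supp → ℕ :=
      fun d v hv => L d ⟨v, hv⟩ with hg
    set ℓ : V → ℕ := fun v => Nat.pair (F (G.connectedComponentMk v))
      (g (G.connectedComponentMk v) v rfl) with hℓdef
    have key : ∀ (d : G.ConnectedComponent) (v : V) (hv : v ∈ d.supp),
        ℓ v = Nat.pair (F d) (g d v hv) := by
      intro d v hv
      have hv' : G.connectedComponentMk v = d := hv
      subst hv'
      rfl
    have hinj : Function.Injective ℓ := by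
      intro u v huv
      have h1 := (Nat.pair_eq_pair.mp huv).1
      have h2 := (Nat.pair_eq_pair.mp huv).2
      have hd : G.connectedComponentMk u = G.connectedComponentMk v := hF h1
      have hu : u ∈ (G.connectedComponentMk v).supp := hd
      have := key (G.connectedComponentMk v) u hu
      rw [this] at huv
      have h2' := (Nat.pair_eq_pair.mp huv).2
      have : (⟨u, hu⟩ : (G.connectedComponentMk v).supp) = ⟨v, rfl⟩ :=
        (L _).injective h2'
      exact congrArg Subtype.val this
    refine ⟨⟨ℓ, hinj⟩, ?_⟩
    intro i j k hij hik hjk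
    set d := G.connectedComponentMk i with hd
    have hjd : j ∈ d.supp := (SimpleGraph.ConnectedComponent.connectedComponentMk_eq_of_adj hij).symm
    have hkd : k ∈ d.supp := (SimpleGraph.ConnectedComponent.connectedComponentMk_eq_of_adj hik).symm
    have hid : i ∈ d.supp := rfl
    have hclosed := hL d ⟨i, hid⟩ ⟨j, hjd⟩ ⟨k, hkd⟩
      (by simpa using hij) (by simpa using hik)
      (fun h => hjk (congrArg Subtype.val h))
    have lt_iff : ∀ (u w : V) (hu : u ∈ d.supp) (hw : w ∈ d.supp),
        (ℓ u < ℓ w ↔ L d ⟨u, hu⟩ < L d ⟨w, hw⟩) := by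
      intro u w hu hw
      rw [key d u hu, key d w hw]
      simp only [hg]
      exact (show StrictMono (fun b => Nat.pair (F d) b) from
        fun a b h => Nat.pair_lt_pair_right _ h).lt_iff_lt
    constructor
    · intro h1 h2
      have := hclosed.1 ((lt_iff i j hid hjd).mp h1) ((lt_iff i k hid hkd).mp h2)
      simpa using this
    · intro h1 h2
      have := hclosed.2 ((lt_iff j i hjd hid).mp h1) ((lt_iff k i hkd hid).mp h2)
      simpa using this
end

section
/- Let G be a closed graph on [n] with respect to the given labelling, with lexicographic order induced by x_1 > ... > x_n > y_1 > ... > y_n. Then the initial ideal in(J_G) is generated by the monomials x_i y_j for edges {i,j} of G with i < j; in particular, in(J_G) is the edge ideal of a bipartite graph on the vertex set {x_1,...,x_n} ∪ {y_1,...,y_n}. -/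
open MvPolynomial

/-- The priority of a variable in the order `x_1 > x_2 > … > x_n > y_1 > … > y_n`
(smaller rank = bigger variable). -/
def rank (n : ℕ) : (Fin n ⊕ Fin n) → ℕ := Sum.elim (fun i => (i : ℕ)) (fun i => n + i)

/-- `m` is the lexicographic term order induced by `x_1 > … > x_n > y_1 > … > y_n`:
`u ≺ v` iff `u a < v a` at the most significant variable `a` where `u` and `v` differ. -/
def IsLexXY {n : ℕ} (m : MonomialOrder (Fin n ⊕ Fin n)) : Prop :=
  ∀ u v : (Fin n ⊕ Fin n) →₀ ℕ,
    m.toSyn u < m.toSyn v ↔ ∃ a, u a < v a ∧ ∀ b, rank n b < rank n a → u b = v b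

namespace Stmt16Aux

variable {n : ℕ} {K : Type*} [Field K]

lemma xy_inl (i j k : Fin n) : xy i j (Sum.inl k) = if k = i then 1 else 0 := by
  simp [xy, Finsupp.single_apply, eq_comm]

lemma xy_inr (i j k : Fin n) : xy i j (Sum.inr k) = if k = j then 1 else 0 := by
  simp [xy, Finsupp.single_apply, eq_comm]

/-- One rewriting step: replace a factor `x_i y_j` (for an edge `i < j`) by `x_j y_i`. -/
def Step (G : SimpleGraph (Fin n)) (u v : (Fin n ⊕ Fin n) →₀ ℕ) : Prop :=
  ∃ ν : (Fin n ⊕ Fin n) →₀ ℕ, ∃ i j : Fin n,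
    i < j ∧ G.Adj i j ∧ u = ν + xy i j ∧ v = ν + xy j i

variable {m : MonomialOrder (Fin n ⊕ Fin n)}

lemma toSyn_lt_of (hlex : IsLexXY m) {u v : (Fin n ⊕ Fin n) →₀ ℕ} (a : Fin n ⊕ Fin n)
    (h1 : u a < v a) (h2 : ∀ b, rank n b < rank n a → u b = v b) :
    m.toSyn u < m.toSyn v :=
  (hlex u v).mpr ⟨a, h1, h2⟩

lemma step_lt (hlex : IsLexXY m) {G : SimpleGraph (Fin n)}
    {u v : (Fin n ⊕ Fin n) →₀ ℕ} (h : Step G u v) : m.toSyn v < m.toSyn u := by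
  obtain ⟨ν, i, j, hij, -, rfl, rfl⟩ := h
  have hij' : (i : ℕ) < (j : ℕ) := hij
  refine toSyn_lt_of hlex (Sum.inl i) ?_ ?_
  · have hji : ¬(i = j) := ne_of_lt hij
    simp only [Finsupp.add_apply, xy_inl, eq_self_iff_true, if_true, if_neg hji]
    omega
  · rintro (k | k) hb
    · have hk : (k : ℕ) < (i : ℕ) := hb
      have h1 : ¬(k = i) := fun h => by subst h; omega
      have h2 : ¬(k = j) := fun h => by subst h; omega
      simp only [Finsupp.add_apply, xy_inl, if_neg h1, if_neg h2]
    · exfalso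
      have hb' : n + (k : ℕ) < (i : ℕ) := hb
      have := i.isLt
      omega

lemma rtg_le (hlex : IsLexXY m) {G : SimpleGraph (Fin n)}
    {a b : (Fin n ⊕ Fin n) →₀ ℕ} (h : Relation.ReflTransGen (Step G) a b) :
    m.toSyn b ≤ m.toSyn a := by
  induction h with
  | refl => exact le_refl _
  | tail _ hbc ih => exact ((step_lt hlex hbc).le).trans ih

lemma exists_add_single {ν : (Fin n ⊕ Fin n) →₀ ℕ} {a : Fin n ⊕ Fin n} (h : 1 ≤ ν a) :
    ∃ τ, ν = τ + Finsupp.single a 1 := by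
  refine ⟨ν - Finsupp.single a 1, ?_⟩
  ext b
  rcases eq_or_ne b a with rfl | hba
  · simp only [Finsupp.add_apply, Finsupp.tsub_apply, Finsupp.single_eq_same]
    omega
  · simp only [Finsupp.add_apply, Finsupp.tsub_apply,
      Finsupp.single_eq_of_ne' (Ne.symm hba)]
    omega

lemma step_confluent {G : SimpleGraph (Fin n)}
    (hclosed : ClosedWrt G (fun a b : Fin n => a < b)) :
    ∀ u v w, Step G u v → Step G u w →
      ∃ d, Relation.ReflGen (Step G) v d ∧ Relation.ReflTransGen (Step G) w d := by
  rintro u v w ⟨ν, i, j, hij, hadj, rfl, rfl⟩ ⟨ρ, k, l, hkl, hadj2, hu, rfl⟩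
  by_cases hik : i = k
  · subst hik
    by_cases hjl : j = l
    · subst hjl
      have hνρ : ν = ρ := by
        ext a
        have h := DFunLike.congr_fun hu a
        simp only [Finsupp.add_apply] at h
        omega
      refine ⟨ρ + xy j i, ?_, Relation.ReflTransGen.refl⟩
      rw [hνρ]
    · -- shared smaller endpoint i, edges {i,j}, {i,l}
      have hadjjl : G.Adj j l := (hclosed i j l hadj hadj2 hjl).1 hij hkl
      have hl : 1 ≤ ν (Sum.inr l) := by
        have h := DFunLike.congr_fun hu (Sum.inr l)
        simp only [Finsupp.add_apply, xy_inr, eq_self_iff_true, if_true, if_neg (Ne.symm hjl)] at h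
        omega
      obtain ⟨τ, hτ⟩ := exists_add_single hl
      have hρ : ρ = τ + Finsupp.single (Sum.inr j) 1 := by
        have h : ρ + xy i l = (τ + Finsupp.single (Sum.inr j) 1) + xy i l := by
          rw [← hu, hτ]; simp only [xy]; abel
        exact add_right_cancel h
      rcases lt_or_gt_of_ne hjl with hlt | hlt
      · refine ⟨ρ + xy l i, Relation.ReflGen.single ?_, Relation.ReflTransGen.refl⟩
        refine ⟨τ + Finsupp.single (Sum.inr i) 1, j, l, hlt, hadjjl, ?_, ?_⟩
        · rw [hτ]; simp only [xy]; abel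
        · rw [hρ]; simp only [xy]; abel
      · refine ⟨ν + xy j i, Relation.ReflGen.refl, Relation.ReflTransGen.single ?_⟩
        refine ⟨τ + Finsupp.single (Sum.inr i) 1, l, j, hlt, hadjjl.symm, ?_, ?_⟩
        · rw [hρ]; simp only [xy]; abel
        · rw [hτ]; simp only [xy]; abel
  · by_cases hjl : j = l
    · subst hjl
      -- shared larger endpoint j, edges {i,j}, {k,j}
      have hadjik : G.Adj i k := (hclosed j i k hadj.symm hadj2.symm hik).2 hij hkl
      have hk : 1 ≤ ν (Sum.inl k) := by
        have h := DFunLike.congr_fun hu (Sum.inl k)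
        simp only [Finsupp.add_apply, xy_inl, eq_self_iff_true, if_true, if_neg (Ne.symm hik)] at h
        omega
      obtain ⟨τ, hτ⟩ := exists_add_single hk
      have hρ : ρ = τ + Finsupp.single (Sum.inl i) 1 := by
        have h : ρ + xy k j = (τ + Finsupp.single (Sum.inl i) 1) + xy k j := by
          rw [← hu, hτ]; simp only [xy]; abel
        exact add_right_cancel h
      rcases lt_or_gt_of_ne hik with hlt | hlt
      · refine ⟨ν + xy j i, Relation.ReflGen.refl, Relation.ReflTransGen.single ?_⟩
        refine ⟨τ + Finsupp.single (Sum.inl j) 1, i, k, hlt, hadjik, ?_, ?_⟩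
        · rw [hρ]; simp only [xy]; abel
        · rw [hτ]; simp only [xy]; abel
      · refine ⟨ρ + xy j k, Relation.ReflGen.single ?_, Relation.ReflTransGen.refl⟩
        refine ⟨τ + Finsupp.single (Sum.inl j) 1, k, i, hlt, hadjik.symm, ?_, ?_⟩
        · rw [hτ]; simp only [xy]; abel
        · rw [hρ]; simp only [xy]; abel
    · -- disjoint case
      have hk : 1 ≤ ν (Sum.inl k) := by
        have h := DFunLike.congr_fun hu (Sum.inl k)
        simp only [Finsupp.add_apply, xy_inl, eq_self_iff_true, if_true, if_neg (Ne.symm hik)] at h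
        omega
      obtain ⟨τ1, hτ1⟩ := exists_add_single hk
      have hl : 1 ≤ τ1 (Sum.inr l) := by
        have h := DFunLike.congr_fun hu (Sum.inr l)
        have h2 := DFunLike.congr_fun hτ1 (Sum.inr l)
        simp only [Finsupp.add_apply, xy_inr, eq_self_iff_true, if_true, if_neg (Ne.symm hjl),
          Finsupp.single_eq_of_ne' (by simp : (Sum.inl k : Fin n ⊕ Fin n) ≠ Sum.inr l)] at h h2
        omega
      obtain ⟨τ, hτ2⟩ := exists_add_single hl
      have hτ : ν = τ + xy k l := by
        rw [hτ1, hτ2]; simp only [xy]; abel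
      have hρ : ρ = τ + xy i j := by
        have h : ρ + xy k l = (τ + xy i j) + xy k l := by
          rw [← hu, hτ]; abel
        exact add_right_cancel h
      refine ⟨(τ + xy j i) + xy l k, Relation.ReflGen.single ?_, Relation.ReflTransGen.single ?_⟩
      · exact ⟨τ + xy j i, k, l, hkl, hadj2, by rw [hτ]; abel, rfl⟩
      · exact ⟨τ + xy l k, i, j, hij, hadj, by rw [hρ]; abel, by abel⟩

/-- The linear functional summing the coefficients of the monomials weighted by `g`. -/
noncomputable def phi (g : ((Fin n ⊕ Fin n) →₀ ℕ) → K) :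
    MvPolynomial (Fin n ⊕ Fin n) K →ₗ[K] K :=
  Finsupp.linearCombination K g ∘ₗ (AddMonoidAlgebra.coeffLinearEquiv K).toLinearMap

lemma phi_monomial (g : ((Fin n ⊕ Fin n) →₀ ℕ) → K) (μ : (Fin n ⊕ Fin n) →₀ ℕ) (c : K) :
    phi g (monomial μ c) = c * g μ := by
  have h : (AddMonoidAlgebra.coeffLinearEquiv K) (monomial μ c : MvPolynomial (Fin n ⊕ Fin n) K)
      = Finsupp.single μ c := rfl
  rw [phi, LinearMap.comp_apply, LinearEquiv.coe_coe, h]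
  exact (Finsupp.linearCombination_single K c μ).trans (smul_eq_mul _ _)

lemma phi_apply (g : ((Fin n ⊕ Fin n) →₀ ℕ) → K) (f : MvPolynomial (Fin n ⊕ Fin n) K) :
    phi g f = ∑ d ∈ MvPolynomial.support f, MvPolynomial.coeff d f * g d :=
  (Finsupp.linearCombination_apply K (l := AddMonoidAlgebra.coeffLinearEquiv K f) (v := g)).trans rfl

lemma XX (a b : Fin n) :
    (X (Sum.inl a) * X (Sum.inr b) : MvPolynomial (Fin n ⊕ Fin n) K) =
      monomial (xy a b) 1 := by
  have h : ∀ s : Fin n ⊕ Fin n,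
      (X s : MvPolynomial (Fin n ⊕ Fin n) K) = monomial (Finsupp.single s 1) 1 := fun _ => rfl
  rw [h, h, monomial_mul, one_mul]
  rfl

lemma phi_gen_mul {G : SimpleGraph (Fin n)} (g : ((Fin n ⊕ Fin n) →₀ ℕ) → K)
    (hg : ∀ a b, Step G a b → g a = g b)
    (h : MvPolynomial (Fin n ⊕ Fin n) K) {i j : Fin n} (hij : i < j) (hadj : G.Adj i j) :
    phi g (h * (X (Sum.inl i) * X (Sum.inr j) - X (Sum.inl j) * X (Sum.inr i))) = 0 := by
  induction h using MvPolynomial.induction_on' with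
  | monomial u a =>
    rw [XX, XX, mul_sub, monomial_mul, monomial_mul, mul_one, map_sub,
      phi_monomial, phi_monomial]
    rw [hg (u + xy i j) (u + xy j i) ⟨u, i, j, hij, hadj, rfl, rfl⟩]
    ring
  | add p q hp hq =>
    rw [add_mul, map_add, hp, hq, add_zero]

lemma phi_vanish {G : SimpleGraph (Fin n)} (g : ((Fin n ⊕ Fin n) →₀ ℕ) → K)
    (hg : ∀ a b, Step G a b → g a = g b)
    {f : MvPolynomial (Fin n ⊕ Fin n) K} (hf : f ∈ Ideal.span (edgeGens n K G)) :
    phi g f = 0 := by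
  rw [← Ideal.submodule_span_eq] at hf
  obtain ⟨c, hc, rfl⟩ := Submodule.mem_span_set.mp hf
  rw [Finsupp.sum, map_sum]
  apply Finset.sum_eq_zero
  intro p hp
  obtain ⟨i, j, hij, hadj, hp'⟩ := hc hp
  rw [hp', smul_eq_mul]
  exact phi_gen_mul g hg _ hij hadj

end Stmt16Aux

open Stmt16Aux in
theorem stmt16 {n : ℕ} (K : Type*) [Field K] (G : SimpleGraph (Fin n))
    (hclosed : ClosedWrt G (fun a b : Fin n => a < b))
    (m : MonomialOrder (Fin n ⊕ Fin n)) (hlex : IsLexXY m) :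
    Ideal.span (ldMon m '' {f | f ∈ Ideal.span (edgeGens n K G) ∧ f ≠ 0}) =
      Ideal.span {p : MvPolynomial (Fin n ⊕ Fin n) K | ∃ i j : Fin n,
        i < j ∧ G.Adj i j ∧ p = X (Sum.inl i) * X (Sum.inr j)} := by
  classical
  have hequiv : Equivalence (Relation.Join (Relation.ReflTransGen (Step G))) :=
    Relation.equivalence_join_reflTransGen (step_confluent hclosed)
  set R : ((Fin n ⊕ Fin n) →₀ ℕ) → ((Fin n ⊕ Fin n) →₀ ℕ) → Prop :=
    Relation.Join (Relation.ReflTransGen (Step G)) with hR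
  apply le_antisymm
  · rw [Ideal.span_le]
    rintro p ⟨f, ⟨hf, hf0⟩, rfl⟩
    have hsupp : (MvPolynomial.support f).Nonempty := support_nonempty.mpr hf0
    obtain ⟨μ, hμmem, hμ⟩ := Finset.exists_mem_eq_sup _ hsupp (fun d => m.toSyn d)
    have hld : ldMon m f = monomial μ 1 := by
      rw [ldMon, hμ, AddEquiv.symm_apply_apply]
    by_cases hstep : ∃ w, Step G μ w
    · obtain ⟨w, ⟨ν, i, j, hij, hadj, hμeq, -⟩⟩ := hstep
      have hmono : (monomial μ (1 : K)) =
          monomial ν 1 * (X (Sum.inl i) * X (Sum.inr j)) := by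
        rw [XX, monomial_mul, one_mul, hμeq]
      rw [SetLike.mem_coe, hld, hmono]
      exact Ideal.mul_mem_left _ _ (Ideal.subset_span ⟨i, j, hij, hadj, rfl⟩)
    · exfalso
      push_neg at hstep
      set g : ((Fin n ⊕ Fin n) →₀ ℕ) → K := fun d => if R d μ then 1 else 0 with hg
      have hgstep : ∀ a b, Step G a b → g a = g b := by
        intro a b hab
        have hRab : R a b := ⟨b, Relation.ReflTransGen.single hab, Relation.ReflTransGen.refl⟩
        simp only [hg]
        by_cases h : R b μ
        · rw [if_pos (hequiv.trans hRab h), if_pos h]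
        · rw [if_neg (fun h' => h (hequiv.trans (hequiv.symm hRab) h')), if_neg h]
      have h0 := phi_vanish g hgstep hf
      rw [phi_apply] at h0
      have hkey : ∀ d ∈ MvPolynomial.support f, g d = if d = μ then 1 else 0 := by
        intro d hd
        simp only [hg]
        by_cases hRd : R d μ
        · have hdμ : d = μ := by
            obtain ⟨e, hde, hμe⟩ := hRd
            have he : e = μ := by
              rcases Relation.ReflTransGen.cases_head hμe with h | ⟨c, hc, -⟩
              · exact h.symm
              · exact absurd hc (hstep c)
            rw [he] at hde
            have h1 : m.toSyn μ ≤ m.toSyn d := rtg_le hlex hde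
            have h2 : m.toSyn d ≤ m.toSyn μ := by rw [← hμ]; exact Finset.le_sup hd
            exact m.toSyn.injective (le_antisymm h2 h1)
          rw [if_pos hRd, if_pos hdμ]
        · rw [if_neg hRd, if_neg (fun h => hRd (by rw [h]; exact hequiv.refl μ))]
      rw [Finset.sum_congr rfl (fun d hd => by rw [hkey d hd])] at h0
      rw [Finset.sum_eq_single μ (fun b _ hb => by rw [if_neg hb, mul_zero])
        (fun h => absurd hμmem h), if_pos rfl, mul_one] at h0
      exact (mem_support_iff.mp hμmem) h0
  · rw [Ideal.span_le]
    rintro p ⟨i, j, hij, hadj, rfl⟩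
    have hlt : m.toSyn (xy j i) < m.toSyn (xy i j) :=
      step_lt hlex ⟨0, i, j, hij, hadj, (zero_add _).symm, (zero_add _).symm⟩
    have hne : xy j i ≠ xy i j := fun h => absurd (h ▸ hlt) (lt_irrefl _)
    set f : MvPolynomial (Fin n ⊕ Fin n) K :=
      X (Sum.inl i) * X (Sum.inr j) - X (Sum.inl j) * X (Sum.inr i) with hfdef
    have hmem : f ∈ Ideal.span (edgeGens n K G) :=
      Ideal.subset_span ⟨i, j, hij, hadj, rfl⟩
    have hco : MvPolynomial.coeff (xy i j) f = 1 := by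
      rw [hfdef, XX, XX, coeff_sub]
      simp [coeff_monomial, hne]
    have hf0 : f ≠ 0 := fun h => by
      rw [h, coeff_zero] at hco; exact one_ne_zero hco.symm
    have hsup : (MvPolynomial.support f).sup (fun d => m.toSyn d) = m.toSyn (xy i j) := by
      apply le_antisymm
      · apply Finset.sup_le
        intro d hd
        have hd' : d ∈ (MvPolynomial.support (monomial (xy i j) (1:K))) ∪
            (MvPolynomial.support (monomial (xy j i) (1:K))) := by
          apply MvPolynomial.support_sub
          rw [hfdef, XX, XX] at hd
          exact hd
        rw [Finset.mem_union, support_monomial, support_monomial] at hd'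
        simp only [if_neg (one_ne_zero (α := K)), Finset.mem_singleton] at hd'
        rcases hd' with rfl | rfl
        · exact le_refl _
        · exact hlt.le
      · exact Finset.le_sup (mem_support_iff.mpr (by rw [hco]; exact one_ne_zero))
    have hld : ldMon m f = X (Sum.inl i) * X (Sum.inr j) := by
      rw [ldMon, hsup, AddEquiv.symm_apply_apply, ← XX]
    exact Ideal.subset_span ⟨f, ⟨hmem, hf0⟩, hld⟩
end
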